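/- arXiv:2408.07775 — 3 statements merged into one kernel-verified Lean document; each statement's English description precedes it below -/
import Mathlib

section
/- Let n, ν ∈ ℕ, s ∈ (0, n/2), and let {z_{i,m}}_{m∈ℕ} ⊂ ℝⁿ and {λ_{i,m}}_{m∈ℕ} ⊂ (0,∞) for i = 1,…,ν satisfy: (a) λ_{1,m} ≤ λ_{2,m} ≤ … ≤ λ_{ν,m} for all m; (b) the ν-tuples of bubbles (U[z_{1,m},λ_{1,m}],…,U[z_{ν,m},λ_{ν,m}]) are δ'_m-interacting with δ'_m → 0 as m → ∞; (c) for each pair i < j, the sequence z_{ij,m} := λ_{i,m}(z_{j,m} − z_{i,m}) either converges to some point of ℝⁿ or satisfies |z_{ij,m}| → ∞. Define the relation i ≺ j on {1,…,ν} by: i ≺ j iff i < j and lim_{m→∞} z_{ij,m} exists in ℝⁿ. Then ≺ is a strict partial order, and for every j ∈ {1,…,ν} the set {i : i ⪯ j} is totally ordered by the corresponding non-strict order ⪯ (so ({1,…,ν}, ⪯) is a rooted forest). -/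
open MeasureTheory Real Filter
open scoped FourierTransform ENNReal Topology

noncomputable section

abbrev Euc (n : ℕ) := EuclideanSpace ℝ (Fin n)

/-- Fourier transform of a real-valued function on `ℝⁿ`. -/
def ft (n : ℕ) (u : Euc n → ℝ) : Euc n → ℂ :=
  VectorFourier.fourierIntegral Real.fourierChar volume (innerₗ (Euc n)) (fun x => (u x : ℂ))

/-- Square of the homogeneous Sobolev norm `‖u‖_{Ḣ^s}²`. -/
def hsNormSq (n : ℕ) (s : ℝ) (u : Euc n → ℝ) : ℝ :=
  ∫ ξ : Euc n, ‖ξ‖ ^ (2*s) * ‖ft n u ξ‖ ^ 2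

/-- The homogeneous Sobolev norm `‖u‖_{Ḣ^s}`. -/
def hsNorm (n : ℕ) (s : ℝ) (u : Euc n → ℝ) : ℝ :=
  Real.sqrt (hsNormSq n s u)

/-- Membership in the homogeneous Sobolev space `Ḣ^s(ℝⁿ)`. -/
def memHs (n : ℕ) (s : ℝ) (u : Euc n → ℝ) : Prop :=
  Integrable (fun ξ : Euc n => ‖ξ‖ ^ (2*s) * ‖ft n u ξ‖ ^ 2)

/-- The `Ḣ^s` inner product. -/
def hsInner (n : ℕ) (s : ℝ) (f g : Euc n → ℝ) : ℂ :=
  ∫ ξ : Euc n, ((‖ξ‖ ^ (2*s) : ℝ) : ℂ) * (ft n f ξ * (starRingEnd ℂ) (ft n g ξ))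

/-- `fracEq n s f g` encodes the equation `(-Δ)^s f = g` via the Fourier transform
`𝓕((-Δ)^s f)(ξ) = ‖ξ‖^{2s} 𝓕f(ξ)`. -/
def fracEq (n : ℕ) (s : ℝ) (f g : Euc n → ℝ) : Prop :=
  ∀ ξ : Euc n, ((‖ξ‖ ^ (2*s) : ℝ) : ℂ) * ft n f ξ = ft n g ξ

/-- The critical exponent `p = (n+2s)/(n-2s)`. -/
def pexp (n : ℕ) (s : ℝ) : ℝ := ((n:ℝ) + 2*s) / ((n:ℝ) - 2*s)

/-- The normalizing constant `α_{n,s}`. -/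
def bubbleConst (n : ℕ) (s : ℝ) : ℝ :=
  2 ^ (((n:ℝ) - 2*s)/2) *
    (Real.Gamma (((n:ℝ) + 2*s)/2) / Real.Gamma (((n:ℝ) - 2*s)/2)) ^ (((n:ℝ) - 2*s)/(4*s))

/-- The bubble `U[z,λ]`. -/
def bubble (n : ℕ) (s : ℝ) (z : Euc n) (lam : ℝ) (x : Euc n) : ℝ :=
  bubbleConst n s * (lam / (1 + lam ^ 2 * ‖x - z‖ ^ 2)) ^ (((n:ℝ) - 2*s)/2)

/-- The functions `Z^a[z,λ]`, `a = 1,…,n+1`: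
for `a ≤ n`, `Z^a = λ⁻¹ ∂U[z,λ]/∂z_a`, and `Z^{n+1} = λ ∂U[z,λ]/∂λ`. -/
def bubbleZ (n : ℕ) (s : ℝ) (z : Euc n) (lam : ℝ) (a : Fin (n+1)) (x : Euc n) : ℝ :=
  if h : (a : ℕ) < n then
    lam⁻¹ *
      deriv (fun t : ℝ => bubble n s (z + t • EuclideanSpace.single (⟨(a : ℕ), h⟩ : Fin n) 1) lam x) 0
  else
    lam * deriv (fun t : ℝ => bubble n s z t x) lam

/-- The interaction quantity `q_{ij}`. -/
def interq (n : ℕ) (s : ℝ) (z₁ z₂ : Euc n) (l₁ l₂ : ℝ) : ℝ :=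
  (l₁/l₂ + l₂/l₁ + l₁*l₂*‖z₁ - z₂‖ ^ 2) ^ (-(((n:ℝ) - 2*s)/2))

/-- A ν-tuple of bubbles is δ-interacting. -/
def deltaInteracting (n : ℕ) (s : ℝ) (ν : ℕ) (z : Fin ν → Euc n) (lam : Fin ν → ℝ) (δ : ℝ) : Prop :=
  ∀ i j : Fin ν, i ≠ j → interq n s (z i) (z j) (lam i) (lam j) ≤ δ

/-- `𝒬 = max_{i≠j} q_{ij}`. -/
def scrQ (n : ℕ) (s : ℝ) (ν : ℕ) (z : Fin ν → Euc n) (lam : Fin ν → ℝ) : ℝ :=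
  sSup {q : ℝ | ∃ i j : Fin ν, i ≠ j ∧ q = interq n s (z i) (z j) (lam i) (lam j)}

/-- `ℛ_{ij} = max{√(λ_i/λ_j), √(λ_j/λ_i), √(λ_iλ_j)|z_i−z_j|}`. -/
def interR {n : ℕ} (z₁ z₂ : Euc n) (l₁ l₂ : ℝ) : ℝ :=
  max (max (Real.sqrt (l₁/l₂)) (Real.sqrt (l₂/l₁))) (Real.sqrt (l₁*l₂) * ‖z₁ - z₂‖)

/-- `ℛ = (1/2) min_{i≠j} ℛ_{ij}`. -/
def scrR (n : ℕ) (ν : ℕ) (z : Fin ν → Euc n) (lam : Fin ν → ℝ) : ℝ :=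
  (1/2) * sInf {r : ℝ | ∃ i j : Fin ν, i ≠ j ∧ r = interR (z i) (z j) (lam i) (lam j)}

/-- Japanese bracket, as a function of `|y|`. -/
def jb (t : ℝ) : ℝ := Real.sqrt (1 + t ^ 2)

/-- The weight `v_i^{in}` (both the `n > 6s` and the `n = 6s` versions). -/
def vin (n : ℕ) (s R : ℝ) (z : Euc n) (lam : ℝ) (x : Euc n) : ℝ :=
  if (n:ℝ) = 6*s then
    (if lam * ‖x - z‖ < R ^ 2 then
      lam ^ (4*s) * R ^ (-(4*s)) * jb (lam * ‖x - z‖) ^ (-(4*s)) else 0)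
  else
    (if lam * ‖x - z‖ < R then
      lam ^ (((n:ℝ) + 2*s)/2) * R ^ (2*s - (n:ℝ)) * jb (lam * ‖x - z‖) ^ (-(4*s)) else 0)

/-- The weight `v_i^{out}`. -/
def vout (n : ℕ) (s R : ℝ) (z : Euc n) (lam : ℝ) (x : Euc n) : ℝ :=
  if (n:ℝ) = 6*s then
    (if R ^ 2 ≤ lam * ‖x - z‖ then
      lam ^ (4*s) * R ^ (-(2*s)) * (lam * ‖x - z‖) ^ (-(5*s)) else 0)
  else
    (if R ≤ lam * ‖x - z‖ then
      lam ^ (((n:ℝ) + 2*s)/2) * R ^ (-(4*s)) * (lam * ‖x - z‖) ^ (2*s - (n:ℝ)) else 0)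

/-- The weight `w_i^{in}`. -/
def win (n : ℕ) (s R : ℝ) (z : Euc n) (lam : ℝ) (x : Euc n) : ℝ :=
  if (n:ℝ) = 6*s then
    (if lam * ‖x - z‖ < R ^ 2 then
      lam ^ (2*s) * R ^ (-(4*s)) * jb (lam * ‖x - z‖) ^ (-(2*s)) else 0)
  else
    (if lam * ‖x - z‖ < R then
      lam ^ (((n:ℝ) - 2*s)/2) * R ^ (2*s - (n:ℝ)) * jb (lam * ‖x - z‖) ^ (-(2*s)) else 0)

/-- The weight `w_i^{out}`. -/
def wout (n : ℕ) (s R : ℝ) (z : Euc n) (lam : ℝ) (x : Euc n) : ℝ :=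
  if (n:ℝ) = 6*s then
    (if R ^ 2 ≤ lam * ‖x - z‖ then
      lam ^ (2*s) * R ^ (-(2*s)) * (lam * ‖x - z‖) ^ (-(3*s)) else 0)
  else
    (if R ≤ lam * ‖x - z‖ then
      lam ^ (((n:ℝ) - 2*s)/2) * R ^ (-(4*s)) * (lam * ‖x - z‖) ^ (4*s - (n:ℝ)) else 0)

/-- `𝒱 = Σ_i (v_i^{in} + v_i^{out})`. -/
def mcV (n : ℕ) (s : ℝ) (ν : ℕ) (z : Fin ν → Euc n) (lam : Fin ν → ℝ) (x : Euc n) : ℝ :=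
  ∑ i, (vin n s (scrR n ν z lam) (z i) (lam i) x + vout n s (scrR n ν z lam) (z i) (lam i) x)

/-- `𝒲 = Σ_i (w_i^{in} + w_i^{out})`. -/
def mcW (n : ℕ) (s : ℝ) (ν : ℕ) (z : Fin ν → Euc n) (lam : Fin ν → ℝ) (x : Euc n) : ℝ :=
  ∑ i, (win n s (scrR n ν z lam) (z i) (lam i) x + wout n s (scrR n ν z lam) (z i) (lam i) x)

/-- Weighted `L∞` norm `sup_x |f(x)|/W(x)`, valued in `ℝ≥0∞`. -/
def wnorm (n : ℕ) (f W : Euc n → ℝ) : ℝ≥0∞ :=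
  ⨆ x : Euc n, ENNReal.ofReal (|f x| / W x)

/-- `σ = Σ_i U[z_i, λ_i]`. -/
def sigmaB (n : ℕ) (s : ℝ) (ν : ℕ) (z : Fin ν → Euc n) (lam : Fin ν → ℝ) (x : Euc n) : ℝ :=
  ∑ i, bubble n s (z i) (lam i) x

/-- `Σ_{i,a} c_i^a U_i^{p-1} Z_i^a`. -/
def interTerm (n : ℕ) (s : ℝ) (ν : ℕ) (z : Fin ν → Euc n) (lam : Fin ν → ℝ)
    (c : Fin ν → Fin (n+1) → ℝ) (x : Euc n) : ℝ :=
  ∑ i, ∑ a, c i a * (bubble n s (z i) (lam i) x) ^ (pexp n s - 1) * bubbleZ n s (z i) (lam i) a x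

/-- Orthogonality conditions `∫ f U_i^{p-1} Z_i^a = 0` for all `i, a`. -/
def orthZ (n : ℕ) (s : ℝ) (ν : ℕ) (z : Fin ν → Euc n) (lam : Fin ν → ℝ) (f : Euc n → ℝ) : Prop :=
  ∀ (i : Fin ν) (a : Fin (n+1)),
    ∫ x : Euc n, f x * (bubble n s (z i) (lam i) x) ^ (pexp n s - 1) *
      bubbleZ n s (z i) (lam i) a x = 0

/-- `Γ(u) = ‖(-Δ)^s u - |u|^{p-1}u‖_{Ḣ^{-s}}`, computed on the Fourier side. -/
def gammaU (n : ℕ) (s : ℝ) (u : Euc n → ℝ) : ℝ :=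
  Real.sqrt (∫ ξ : Euc n, ‖ξ‖ ^ (-(2*s)) *
    ‖((‖ξ‖ ^ (2*s) : ℝ) : ℂ) * ft n u ξ -
      ft n (fun x => |u x| ^ (pexp n s - 1) * u x) ξ‖ ^ 2)

/-- The Riesz potential `Φ_{n,s}(x) = γ_{n,s}|x|^{2s-n}`. -/
def rieszK (n : ℕ) (s : ℝ) (x : Euc n) : ℝ :=
  (Real.Gamma (((n:ℝ) - 2*s)/2) / (Real.pi ^ ((n:ℝ)/2) * 2 ^ (2*s) * Real.Gamma s)) *
    ‖x‖ ^ (2*s - (n:ℝ))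

/-- The relation `i ≺ j` on bubble indices: `i < j` and `z_{ij,m} = λ_{i,m}(z_{j,m}-z_{i,m})`
converges in `ℝⁿ`. -/
def precRel (n ν : ℕ) (z : Fin ν → ℕ → Euc n) (lam : Fin ν → ℕ → ℝ) (i j : Fin ν) : Prop :=
  i < j ∧ ∃ w : Euc n,
    Filter.Tendsto (fun m => lam i m • (z j m - z i m)) Filter.atTop (nhds w)


/-- If `i ≺ j` (λᵢ(z_j−z_i) converges) and the interaction tends to 0, then `λᵢ/λⱼ → 0`. -/
lemma ratio_tendsto_zero (n : ℕ) (s : ℝ) (hs : 0 < s) (hsn : 2*s < (n:ℝ))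
    (zi zj : ℕ → Euc n) (li lj : ℕ → ℝ)
    (hli : ∀ m, 0 < li m) (hlj : ∀ m, 0 < lj m) (hle : ∀ m, li m ≤ lj m)
    (δ' : ℕ → ℝ) (hδ : Filter.Tendsto δ' Filter.atTop (nhds 0))
    (hq : ∀ m, interq n s (zi m) (zj m) (li m) (lj m) ≤ δ' m)
    (w : Euc n)
    (hw : Filter.Tendsto (fun m => li m • (zj m - zi m)) Filter.atTop (nhds w)) :
    Filter.Tendsto (fun m => li m / lj m) Filter.atTop (nhds 0) := by
  set c : ℝ := ((n:ℝ) - 2*s)/2 with hc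
  have hc0 : 0 < c := by simp only [hc]; linarith
  set A : ℕ → ℝ := fun m => li m / lj m + lj m / li m + li m * lj m * ‖zi m - zj m‖ ^ 2
    with hA
  have hApos : ∀ m, 0 < A m := by
    intro m
    have h1 : 0 < li m / lj m := div_pos (hli m) (hlj m)
    have h2 : 0 < lj m / li m := div_pos (hlj m) (hli m)
    have h3 : 0 ≤ li m * lj m * ‖zi m - zj m‖ ^ 2 :=
      mul_nonneg (mul_nonneg (hli m).le (hlj m).le) (sq_nonneg _)
    simp only [hA]; linarith
  have hqA : ∀ m, A m ^ (-c) ≤ δ' m := fun m => hq m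
  -- A tends to atTop
  have hAtop : Filter.Tendsto A Filter.atTop Filter.atTop := by
    rw [Filter.tendsto_atTop]
    intro M
    set M' : ℝ := max M 1 with hM'
    have hM'pos : (0:ℝ) < M' := lt_of_lt_of_le zero_lt_one (le_max_right _ _)
    have hsmall : ∀ᶠ m in Filter.atTop, δ' m < M' ^ (-c) :=
      hδ.eventually (gt_mem_nhds (Real.rpow_pos_of_pos hM'pos _))
    filter_upwards [hsmall] with m hm
    by_contra hcon
    push_neg at hcon
    have hAM : A m ≤ M' := le_trans hcon.le (le_max_left _ _)
    have : M' ^ (-c) ≤ A m ^ (-c) :=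
      Real.rpow_le_rpow_of_nonpos (hApos m) hAM (neg_nonpos.mpr hc0.le)
    have := le_trans this (hqA m)
    linarith
  -- v = li • (zj - zi) is eventually bounded
  set C : ℝ := ‖w‖ ^ 2 + 1 with hC
  have hbound : ∀ᶠ m in Filter.atTop, ‖li m • (zj m - zi m)‖ ^ 2 ≤ C := by
    have hn : Filter.Tendsto (fun m => ‖li m • (zj m - zi m)‖ ^ 2) Filter.atTop
        (nhds (‖w‖ ^ 2)) := (hw.norm.pow 2)
    exact hn.eventually (ge_mem_nhds (by simp only [hC]; linarith))
  -- lj/li tends to atTop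
  have hratio : Filter.Tendsto (fun m => lj m / li m) Filter.atTop Filter.atTop := by
    have key : ∀ᶠ m in Filter.atTop, (A m - 1) / (1 + C) ≤ lj m / li m := by
      filter_upwards [hbound] with m hm
      have hli' := hli m
      have hlj' := hlj m
      have hnorm : ‖li m • (zj m - zi m)‖ ^ 2 = li m ^ 2 * ‖zj m - zi m‖ ^ 2 := by
        rw [norm_smul, Real.norm_eq_abs, abs_of_pos hli', mul_pow]
      have hthird : li m * lj m * ‖zi m - zj m‖ ^ 2
          = (lj m / li m) * (li m ^ 2 * ‖zj m - zi m‖ ^ 2) := by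
        rw [norm_sub_rev]; field_simp
      have hC0 : 0 ≤ ‖li m • (zj m - zi m)‖ ^ 2 := sq_nonneg _
      have hCpos : (0:ℝ) < 1 + C := by
        have : (0:ℝ) ≤ ‖w‖ ^ 2 := sq_nonneg _
        simp only [hC]; linarith
      have h1 : li m / lj m ≤ 1 := div_le_one_of_le₀ (hle m) hlj'.le
      have hr : 0 < lj m / li m := div_pos hlj' hli'
      have hthird' : li m * lj m * ‖zi m - zj m‖ ^ 2 ≤ (lj m / li m) * C := by
        rw [hthird]
        exact mul_le_mul_of_nonneg_left (by rw [← hnorm]; exact hm) hr.le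
      have hAle : A m ≤ 1 + (lj m / li m) * (1 + C) := by
        simp only [hA]
        nlinarith
      rw [div_le_iff₀ hCpos]
      nlinarith
    exact Filter.tendsto_atTop_mono' _ key
      ((Filter.tendsto_atTop_add_const_right _ (-1) hAtop).atTop_div_const (by
        have : (0:ℝ) ≤ ‖w‖ ^ 2 := sq_nonneg _
        simp only [hC]; linarith))
  have := hratio.inv_tendsto_atTop
  refine this.congr (fun m => ?_)
  simp only [Pi.inv_apply, inv_div]

/-- Lemma 4.4: the tree structure of δ-interacting bubbles:
`≺` is a strict partial order and the set of predecessors of any index is totally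
ordered, so the index set is a rooted forest. -/
theorem stmt9 (n ν : ℕ) (s : ℝ) (hs : 0 < s) (hsn : 2*s < (n:ℝ))
    (z : Fin ν → ℕ → Euc n) (lam : Fin ν → ℕ → ℝ)
    (hpos : ∀ i m, 0 < lam i m)
    (hmono : ∀ (m : ℕ) (i j : Fin ν), i ≤ j → lam i m ≤ lam j m)
    (δ' : ℕ → ℝ)
    (hδ : Filter.Tendsto δ' Filter.atTop (nhds 0))
    (hinter : ∀ m, deltaInteracting n s ν (fun i => z i m) (fun i => lam i m) (δ' m))
    (hdich : ∀ i j : Fin ν, i < j →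
      (∃ w : Euc n,
        Filter.Tendsto (fun m => lam i m • (z j m - z i m)) Filter.atTop (nhds w)) ∨
      Filter.Tendsto (fun m => ‖lam i m • (z j m - z i m)‖) Filter.atTop Filter.atTop) :
    (∀ i : Fin ν, ¬ precRel n ν z lam i i) ∧
    (∀ i j k : Fin ν, precRel n ν z lam i j → precRel n ν z lam j k → precRel n ν z lam i k) ∧
    (∀ j i₁ i₂ : Fin ν,
      (precRel n ν z lam i₁ j ∨ i₁ = j) → (precRel n ν z lam i₂ j ∨ i₂ = j) →
      precRel n ν z lam i₁ i₂ ∨ i₁ = i₂ ∨ precRel n ν z lam i₂ i₁) := by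
  -- ratio lemma specialized
  have hratio : ∀ i j : Fin ν, i < j → ∀ w : Euc n,
      Filter.Tendsto (fun m => lam i m • (z j m - z i m)) Filter.atTop (nhds w) →
      Filter.Tendsto (fun m => lam i m / lam j m) Filter.atTop (nhds 0) := by
    intro i j hij w hw
    exact ratio_tendsto_zero n s hs hsn (z i) (z j) (lam i) (lam j)
      (hpos i) (hpos j) (fun m => hmono m i j hij.le) δ' hδ
      (fun m => hinter m i j (Fin.ne_of_lt hij)) w hw
  -- the key comparability lemma
  have key : ∀ (j i₁ i₂ : Fin ν), i₁ < i₂ →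
      (∃ w : Euc n, Filter.Tendsto (fun m => lam i₁ m • (z j m - z i₁ m))
        Filter.atTop (nhds w)) →
      (∃ w : Euc n, Filter.Tendsto (fun m => lam i₂ m • (z j m - z i₂ m))
        Filter.atTop (nhds w)) →
      precRel n ν z lam i₁ i₂ := by
    intro j i₁ i₂ h12 ⟨w₁, hw₁⟩ ⟨w₂, hw₂⟩
    refine ⟨h12, ?_⟩
    rcases hdich i₁ i₂ h12 with h | h
    · exact h
    · exfalso
      have heq : ∀ m, lam i₁ m • (z i₂ m - z i₁ m)
          = lam i₁ m • (z j m - z i₁ m)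
            - (lam i₁ m / lam i₂ m) • (lam i₂ m • (z j m - z i₂ m)) := by
        intro m
        rw [smul_smul, div_mul_cancel₀ _ (hpos i₂ m).ne', ← smul_sub]
        congr 1
        abel
      have hb1 : ∀ᶠ m in Filter.atTop, ‖lam i₁ m • (z j m - z i₁ m)‖ < ‖w₁‖ + 1 :=
        hw₁.norm.eventually (gt_mem_nhds (lt_add_one _))
      have hb2 : ∀ᶠ m in Filter.atTop, ‖lam i₂ m • (z j m - z i₂ m)‖ < ‖w₂‖ + 1 :=
        hw₂.norm.eventually (gt_mem_nhds (lt_add_one _))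
      have hbig : ∀ᶠ m in Filter.atTop,
          ‖w₁‖ + ‖w₂‖ + 2 < ‖lam i₁ m • (z i₂ m - z i₁ m)‖ :=
        h.eventually_gt_atTop _
      obtain ⟨m, h1, h2, h3⟩ := (hb1.and (hb2.and hbig)).exists
      have hr1 : |lam i₁ m / lam i₂ m| ≤ 1 := by
        rw [abs_of_pos (div_pos (hpos i₁ m) (hpos i₂ m))]
        exact div_le_one_of_le₀ (hmono m i₁ i₂ h12.le) (hpos i₂ m).le
      have hle2 : ‖lam i₁ m • (z i₂ m - z i₁ m)‖
          ≤ ‖lam i₁ m • (z j m - z i₁ m)‖ + ‖lam i₂ m • (z j m - z i₂ m)‖ := by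
        rw [heq m]
        refine le_trans (norm_sub_le _ _) ?_
        have : ‖(lam i₁ m / lam i₂ m) • (lam i₂ m • (z j m - z i₂ m))‖
            ≤ ‖lam i₂ m • (z j m - z i₂ m)‖ := by
          rw [norm_smul, Real.norm_eq_abs]
          exact mul_le_of_le_one_left (norm_nonneg _) hr1
        linarith
      linarith
  refine ⟨?_, ?_, ?_⟩
  · intro i ⟨hlt, _⟩
    exact lt_irrefl i hlt
  · rintro i j k ⟨hij, w₁, hw₁⟩ ⟨hjk, w₂, hw₂⟩
    refine ⟨hij.trans hjk, ⟨w₁, ?_⟩⟩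
    have hr : Filter.Tendsto (fun m => lam i m / lam j m) Filter.atTop (nhds 0) :=
      hratio i j hij w₁ hw₁
    have heq : ∀ m, lam i m • (z k m - z i m)
        = lam i m • (z j m - z i m)
          + (lam i m / lam j m) • (lam j m • (z k m - z j m)) := by
      intro m
      rw [smul_smul, div_mul_cancel₀ _ (hpos j m).ne', ← smul_add]
      congr 1
      abel
    have hlim : Filter.Tendsto
        (fun m => lam i m • (z j m - z i m)
          + (lam i m / lam j m) • (lam j m • (z k m - z j m)))
        Filter.atTop (nhds (w₁ + (0:ℝ) • w₂)) := hw₁.add (hr.smul hw₂)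
    rw [zero_smul, add_zero] at hlim
    exact hlim.congr (fun m => (heq m).symm)
  · intro j i₁ i₂ h₁ h₂
    have hw : ∀ i : Fin ν, (precRel n ν z lam i j ∨ i = j) →
        ∃ w : Euc n, Filter.Tendsto (fun m => lam i m • (z j m - z i m))
          Filter.atTop (nhds w) := by
      rintro i (⟨_, hw⟩ | rfl)
      · exact hw
      · exact ⟨0, by simp [sub_self, smul_zero, tendsto_const_nhds]⟩
    rcases lt_trichotomy i₁ i₂ with h | h | h
    · exact Or.inl (key j i₁ i₂ h (hw i₁ h₁) (hw i₂ h₂))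
    · exact Or.inr (Or.inl h)
    · exact Or.inr (Or.inr (key j i₂ i₁ h (hw i₂ h₂) (hw i₁ h₁)))

end
end

section
/- Let n > 6s, ν ≥ 2, and let {U_i = U[z_i,λ_i]}_{i=1}^ν be a δ-interacting family of bubbles. There exist δ₀ > 0 and C > 0 depending only on n, s, ν such that if δ ≤ δ₀, then for all i ≠ j with λ_i ≤ λ_j and all x ∈ ℝⁿ: (i) U_j^{p−1} w_i^in ≤ C(ℛ_{ij}^{−2s} v_j^in + ℛ^{−2s} v_j^out + ℛ^{−2s} v_i^in); (ii) U_j^{p−1} w_i^out ≤ C(ℛ_{ij}^{−2s} v_j^in + ℛ^{−2s} v_j^out + ℛ^{−2s} v_i^out); (iii) U_i^{p−1} w_j^in ≤ C ℛ_{ij}^{−2s} v_j^in; (iv) U_i^{p−1} w_j^out ≤ C ⟨z_{ij}⟩^{−2s} (v_i^in + v_i^out + v_j^out), where z_{ij} = λ_i(z_j − z_i). -/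
open MeasureTheory Real Filter
open scoped FourierTransform ENNReal Topology

noncomputable section

set_option linter.unusedVariables false
set_option maxHeartbeats 1600000

/-! ### Auxiliary lemmas for Statement 11 -/

lemma stmt11aux_logmul {x y : ℝ} (hx : 0 < x) (hy : 0 < y) :
    Real.log (x*y) = Real.log x + Real.log y := Real.log_mul hx.ne' hy.ne'

lemma stmt11aux_l2 : (0:ℝ) ≤ Real.log 2 := Real.log_nonneg one_le_two

lemma stmt11aux_l3 : Real.log 3 ≤ 2*Real.log 2 := by
  have h := Real.log_le_log (by norm_num : (0:ℝ) < 3) (by norm_num : (3:ℝ) ≤ 2^2)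
  rwa [Real.log_pow, Nat.cast_ofNat] at h

lemma stmt11aux_l6 : Real.log 6 ≤ 3*Real.log 2 := by
  have h := Real.log_le_log (by norm_num : (0:ℝ) < 6) (by norm_num : (6:ℝ) ≤ 2^3)
  rwa [Real.log_pow, Nat.cast_ofNat] at h

lemma stmt11aux_l9 : Real.log 9 ≤ 4*Real.log 2 := by
  have h := Real.log_le_log (by norm_num : (0:ℝ) < 9) (by norm_num : (9:ℝ) ≤ 2^4)
  rwa [Real.log_pow, Nat.cast_ofNat] at h

lemma stmt11aux_l54 : Real.log (5/4) ≤ Real.log 2 :=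
  Real.log_le_log (by norm_num) (by norm_num)

lemma stmt11aux_jb_sq (t c : ℝ) : jb t ^ (2*c) = (1+t^2) ^ c := by
  have h : (0:ℝ) ≤ 1 + t^2 := by positivity
  rw [jb, Real.sqrt_eq_rpow, ← Real.rpow_mul h]
  congr 1
  ring

lemma stmt11aux_jb_n2s (t s : ℝ) : jb t ^ (-(2*s)) = (1+t^2) ^ (-s) := by
  have h := stmt11aux_jb_sq t (-s)
  rw [← h]; congr 1; ring

lemma stmt11aux_jb_n4s (t s : ℝ) : jb t ^ (-(4*s)) = (1+t^2) ^ (-(2*s)) := by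
  have h := stmt11aux_jb_sq t (-(2*s))
  rw [← h]; congr 1; ring

lemma stmt11aux_jb_nonneg (t : ℝ) : 0 ≤ jb t := by rw [jb]; exact Real.sqrt_nonneg _

lemma stmt11aux_bubbleConst_pos {n : ℕ} {s : ℝ} (hs : 0 < s) (h6 : 6*s < (n:ℝ)) :
    0 < bubbleConst n s := by
  have h1 : 0 < Real.Gamma (((n:ℝ)+2*s)/2) := Real.Gamma_pos_of_pos (by linarith)
  have h2 : 0 < Real.Gamma (((n:ℝ)-2*s)/2) := Real.Gamma_pos_of_pos (by linarith)
  exact mul_pos (Real.rpow_pos_of_pos two_pos _) (Real.rpow_pos_of_pos (div_pos h1 h2) _)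

lemma stmt11aux_bubble_pow (n : ℕ) (s : ℝ) (hs : 0 < s) (h6 : 6*s < (n:ℝ))
    (z x : Euc n) (lam : ℝ) (hl : 0 < lam) :
    (bubble n s z lam x) ^ (pexp n s - 1)
      = bubbleConst n s ^ (pexp n s - 1) *
        (lam ^ (2*s) * (1 + (lam*‖x - z‖)^2) ^ (-(2*s))) := by
  have hT : (0:ℝ) < 1 + (lam*‖x - z‖)^2 := by positivity
  have hbc := stmt11aux_bubbleConst_pos hs h6
  have hg : (0:ℝ) ≤ lam / (1 + (lam*‖x - z‖)^2) := by positivity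
  rw [bubble, show lam^2*‖x - z‖^2 = (lam*‖x - z‖)^2 by ring,
    Real.mul_rpow hbc.le (Real.rpow_nonneg hg _), ← Real.rpow_mul hg]
  congr 1
  have hne : (n:ℝ) - 2*s ≠ 0 := by intro h; nlinarith [h, hs, h6]
  have hex : ((n:ℝ)-2*s)/2 * (pexp n s - 1) = 2*s := by
    rw [pexp, div_sub_one hne]
    rw [show (n:ℝ) + 2*s - ((n:ℝ) - 2*s) = 4*s by ring]
    field_simp
    ring
  rw [hex, Real.div_rpow hl.le hT.le, div_eq_mul_inv, ← Real.rpow_neg hT.le]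

lemma stmt11aux_win_eq {n : ℕ} {s R lam : ℝ} {z x : Euc n} (h6 : 6*s < (n:ℝ))
    (hc : lam * ‖x - z‖ < R) :
    win n s R z lam x
      = lam ^ (((n:ℝ)-2*s)/2) * R ^ (2*s-(n:ℝ)) * (1+(lam*‖x - z‖)^2) ^ (-s) := by
  rw [win, if_neg (by intro h; linarith), if_pos hc, stmt11aux_jb_n2s]

lemma stmt11aux_win_zero {n : ℕ} {s R lam : ℝ} {z x : Euc n} (h6 : 6*s < (n:ℝ))
    (hc : ¬ lam * ‖x - z‖ < R) : win n s R z lam x = 0 := by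
  rw [win, if_neg (by intro h; linarith), if_neg hc]

lemma stmt11aux_wout_eq {n : ℕ} {s R lam : ℝ} {z x : Euc n} (h6 : 6*s < (n:ℝ))
    (hc : R ≤ lam * ‖x - z‖) :
    wout n s R z lam x
      = lam ^ (((n:ℝ)-2*s)/2) * R ^ (-(4*s)) * (lam*‖x - z‖) ^ (4*s-(n:ℝ)) := by
  rw [wout, if_neg (by intro h; linarith), if_pos hc]

lemma stmt11aux_wout_zero {n : ℕ} {s R lam : ℝ} {z x : Euc n} (h6 : 6*s < (n:ℝ))
    (hc : ¬ R ≤ lam * ‖x - z‖) : wout n s R z lam x = 0 := by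
  rw [wout, if_neg (by intro h; linarith), if_neg hc]

lemma stmt11aux_vin_eq {n : ℕ} {s R lam : ℝ} {z x : Euc n} (h6 : 6*s < (n:ℝ))
    (hc : lam * ‖x - z‖ < R) :
    vin n s R z lam x
      = lam ^ (((n:ℝ)+2*s)/2) * R ^ (2*s-(n:ℝ)) * (1+(lam*‖x - z‖)^2) ^ (-(2*s)) := by
  rw [vin, if_neg (by intro h; linarith), if_pos hc, stmt11aux_jb_n4s]

lemma stmt11aux_vout_eq {n : ℕ} {s R lam : ℝ} {z x : Euc n} (h6 : 6*s < (n:ℝ))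
    (hc : R ≤ lam * ‖x - z‖) :
    vout n s R z lam x
      = lam ^ (((n:ℝ)+2*s)/2) * R ^ (-(4*s)) * (lam*‖x - z‖) ^ (2*s-(n:ℝ)) := by
  rw [vout, if_neg (by intro h; linarith), if_pos hc]

lemma stmt11aux_vin_nonneg {n : ℕ} (s R : ℝ) (z : Euc n) (lam : ℝ) (x : Euc n)
    (hlam : 0 ≤ lam) (hR : 0 ≤ R) : 0 ≤ vin n s R z lam x := by
  rw [vin]
  split_ifs
  · exact mul_nonneg (mul_nonneg (Real.rpow_nonneg hlam _) (Real.rpow_nonneg hR _))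
      (Real.rpow_nonneg (stmt11aux_jb_nonneg _) _)
  · exact le_refl 0
  · exact mul_nonneg (mul_nonneg (Real.rpow_nonneg hlam _) (Real.rpow_nonneg hR _))
      (Real.rpow_nonneg (stmt11aux_jb_nonneg _) _)
  · exact le_refl 0

lemma stmt11aux_vout_nonneg {n : ℕ} (s R : ℝ) (z : Euc n) (lam : ℝ) (x : Euc n)
    (hlam : 0 ≤ lam) (hR : 0 ≤ R) : 0 ≤ vout n s R z lam x := by
  rw [vout]
  split_ifs
  · exact mul_nonneg (mul_nonneg (Real.rpow_nonneg hlam _) (Real.rpow_nonneg hR _))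
      (Real.rpow_nonneg (mul_nonneg hlam (norm_nonneg _)) _)
  · exact le_refl 0
  · exact mul_nonneg (mul_nonneg (Real.rpow_nonneg hlam _) (Real.rpow_nonneg hR _))
      (Real.rpow_nonneg (mul_nonneg hlam (norm_nonneg _)) _)
  · exact le_refl 0

/-- geometry: when `K ≤ √(ab)·d` and `b·rj < R ≤ K/2`. -/
lemma stmt11aux_geo {a b d ri rj R K : ℝ} (ha : 0 < a) (hab : a ≤ b) (hd : 0 ≤ d)
    (htri : d ≤ ri + rj) (hRK : 2*R ≤ K) (hK0 : 0 < K)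
    (hc : K ≤ Real.sqrt (a*b) * d) (hj : b*rj < R) :
    0 < d ∧ rj < d/2 ∧ d/2 ≤ ri := by
  have hb : 0 < b := lt_of_lt_of_le ha hab
  have hd0 : 0 < d := by
    by_contra h
    push_neg at h
    have : Real.sqrt (a*b) * d ≤ 0 := mul_nonpos_of_nonneg_of_nonpos (Real.sqrt_nonneg _) h
    linarith
  have hsab : Real.sqrt (a*b) ≤ b := by
    have h1 : Real.sqrt (a*b) ≤ Real.sqrt (b^2) := Real.sqrt_le_sqrt (by nlinarith)
    rwa [Real.sqrt_sq hb.le] at h1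
  have hrj2 : rj < d/2 := by
    have h1 : b*rj < b*(d/2) := by nlinarith [mul_le_mul_of_nonneg_right hsab hd0.le]
    exact lt_of_mul_lt_mul_left h1 hb.le
  exact ⟨hd0, hrj2, by linarith⟩

lemma stmt11aux_ia (s n a b d ri rj R K : ℝ) (hs : 0 < s) (h6 : 6*s < n)
    (ha : 0 < a) (hab : a ≤ b) (hd : 0 ≤ d) (hri : 0 ≤ ri) (hrj : 0 ≤ rj)
    (htri : d ≤ ri + rj) (hR1 : 1 ≤ 2*R)
    (hKa : Real.sqrt (b/a) ≤ K) (hKb : Real.sqrt (a*b) * d ≤ K)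
    (hKm : K ≤ max (Real.sqrt (b/a)) (Real.sqrt (a*b) * d)) (hRK : 2*R ≤ K)
    (hi : a * ri < R) (hj : b * rj < R) :
    b ^ (2*s) * (1 + (b*rj)^2) ^ (-(2*s)) *
        (a ^ ((n-2*s)/2) * R ^ (2*s-n) * (1 + (a*ri)^2) ^ (-s))
      ≤ 2 ^ (8*s+2*n) *
        (K ^ (-(2*s)) * (b ^ ((n+2*s)/2) * R ^ (2*s-n) * (1 + (b*rj)^2) ^ (-(2*s)))) := by
  have hb : 0 < b := lt_of_lt_of_le ha hab
  have hR0 : 0 < R := by linarith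
  have hK0 : 0 < K := by linarith
  have hn : 0 < n := by linarith
  have hTi : (0:ℝ) < 1 + (a*ri)^2 := by positivity
  have hTj : (0:ℝ) < 1 + (b*rj)^2 := by positivity
  have lab : Real.log a ≤ Real.log b := Real.log_le_log ha hab
  have lTi0 : 0 ≤ Real.log (1 + (a*ri)^2) := Real.log_nonneg (by nlinarith)
  -- the key log bound:  m·log a + 2s·log K ≤ (8s+2n)·log2 + m·log b + s·log Ti
  have key : (n-2*s)/2 * Real.log a + (2*s) * Real.log K
      ≤ (8*s+2*n) * Real.log 2 + (n-2*s)/2 * Real.log b + s * Real.log (1 + (a*ri)^2) := by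
    rcases le_max_iff.mp hKm with hc | hc
    · have lK : Real.log K ≤ (Real.log b - Real.log a)/2 := by
        have h1 := Real.log_le_log hK0 hc
        rwa [Real.log_sqrt (by positivity), Real.log_div hb.ne' ha.ne'] at h1
      have p1 := mul_le_mul_of_nonneg_left lK (by linarith : (0:ℝ) ≤ 2*s)
      have p3 : 0 ≤ ((n-2*s)/2 - s) * (Real.log b - Real.log a) :=
        mul_nonneg (by linarith) (by linarith)
      have p4 : 0 ≤ s * Real.log (1 + (a*ri)^2) := mul_nonneg hs.le lTi0
      have p5 : 0 ≤ (8*s+2*n) * Real.log 2 :=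
        mul_nonneg (by linarith) stmt11aux_l2
      linarith
    · obtain ⟨hd0, hrj2, hri2⟩ := stmt11aux_geo ha hab hd htri hRK hK0 hc hj
      have lK : Real.log K ≤ (Real.log a + Real.log b)/2 + Real.log d := by
        have h1 := Real.log_le_log hK0 hc
        rwa [stmt11aux_logmul (Real.sqrt_pos.mpr (by positivity)) hd0,
          Real.log_sqrt (by positivity), stmt11aux_logmul ha hb] at h1
      have lTi : 2*(Real.log a + (Real.log d - Real.log 2))
          ≤ Real.log (1 + (a*ri)^2) := by
        have h4 : (a*(d/2))^2 ≤ 1+(a*ri)^2 := by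
          have h2 : (a*(d/2))^2 ≤ (a*ri)^2 :=
            pow_le_pow_left₀ (by positivity) (mul_le_mul_of_nonneg_left hri2 ha.le) 2
          linarith
        have h5 := Real.log_le_log (by positivity) h4
        rw [Real.log_pow, stmt11aux_logmul ha (by positivity : (0:ℝ) < d/2),
          Real.log_div hd0.ne' (by norm_num : (2:ℝ) ≠ 0), Nat.cast_ofNat] at h5
        linarith
      have p1 := mul_le_mul_of_nonneg_left lK (by linarith : (0:ℝ) ≤ 2*s)
      have p2 := mul_le_mul_of_nonneg_left lTi (by linarith : (0:ℝ) ≤ s/2)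
      have p3 : 0 ≤ ((n-2*s)/2 - s) * (Real.log b - Real.log a) :=
        mul_nonneg (by linarith) (by linarith)
      have p5 : 0 ≤ (6*s+2*n) * Real.log 2 := mul_nonneg (by linarith) stmt11aux_l2
      nlinarith [p1, p2, p3, p5]
  simp only [Real.rpow_def_of_pos ha, Real.rpow_def_of_pos hb, Real.rpow_def_of_pos hR0,
    Real.rpow_def_of_pos hK0, Real.rpow_def_of_pos hTi, Real.rpow_def_of_pos hTj,
    Real.rpow_def_of_pos (by norm_num : (0:ℝ) < 2)]
  simp only [← Real.exp_add]
  rw [Real.exp_le_exp]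
  nlinarith [key]

lemma stmt11aux_ib1 (s n a b d ri rj R K : ℝ) (hs : 0 < s) (h6 : 6*s < n)
    (ha : 0 < a) (hab : a ≤ b) (hR1 : 1 ≤ 2*R)
    (hsp : b*(R*Real.sqrt (1+(a*ri)^2)) ≤ a*(1+(b*rj)^2)) :
    b ^ (2*s) * (1 + (b*rj)^2) ^ (-(2*s)) *
        (a ^ ((n-2*s)/2) * R ^ (2*s-n) * (1 + (a*ri)^2) ^ (-s))
      ≤ 2 ^ (8*s+2*n) *
        (R ^ (-(2*s)) * (a ^ ((n+2*s)/2) * R ^ (2*s-n) * (1 + (a*ri)^2) ^ (-(2*s)))) := by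
  have hb : 0 < b := lt_of_lt_of_le ha hab
  have hR0 : 0 < R := by linarith
  have hn : 0 < n := by linarith
  have hTi : (0:ℝ) < 1 + (a*ri)^2 := by positivity
  have hTj : (0:ℝ) < 1 + (b*rj)^2 := by positivity
  have hsTi : 0 < Real.sqrt (1+(a*ri)^2) := Real.sqrt_pos.mpr hTi
  have lsp := Real.log_le_log (by positivity) hsp
  rw [stmt11aux_logmul hb (mul_pos hR0 hsTi), stmt11aux_logmul hR0 hsTi,
    Real.log_sqrt hTi.le, stmt11aux_logmul ha hTj] at lsp
  have p1 := mul_le_mul_of_nonneg_left lsp (by linarith : (0:ℝ) ≤ 2*s)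
  have p5 : 0 ≤ (8*s+2*n) * Real.log 2 := mul_nonneg (by linarith) stmt11aux_l2
  simp only [Real.rpow_def_of_pos ha, Real.rpow_def_of_pos hb, Real.rpow_def_of_pos hR0,
    Real.rpow_def_of_pos hTi, Real.rpow_def_of_pos hTj,
    Real.rpow_def_of_pos (by norm_num : (0:ℝ) < 2)]
  simp only [← Real.exp_add]
  rw [Real.exp_le_exp]
  nlinarith [p1, p5]

lemma stmt11aux_ib2 (s n a b d ri rj R K : ℝ) (hs : 0 < s) (h6 : 6*s < n)
    (ha : 0 < a) (hab : a ≤ b) (hri : 0 ≤ ri) (hR1 : 1 ≤ 2*R)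
    (hi : a * ri < R) (hjout : R ≤ b*rj)
    (hsp : a*(1+(b*rj)^2) ≤ b*(R*Real.sqrt (1+(a*ri)^2))) :
    b ^ (2*s) * (1 + (b*rj)^2) ^ (-(2*s)) *
        (a ^ ((n-2*s)/2) * R ^ (2*s-n) * (1 + (a*ri)^2) ^ (-s))
      ≤ 2 ^ (8*s+2*n) *
        (R ^ (-(2*s)) * (b ^ ((n+2*s)/2) * R ^ (-(4*s)) * (b*rj) ^ (2*s-n))) := by
  have hb : 0 < b := lt_of_lt_of_le ha hab
  have hR0 : 0 < R := by linarith
  have hn : 0 < n := by linarith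
  have hTi : (0:ℝ) < 1 + (a*ri)^2 := by positivity
  have hTj : (0:ℝ) < 1 + (b*rj)^2 := by positivity
  have hsTi : 0 < Real.sqrt (1+(a*ri)^2) := Real.sqrt_pos.mpr hTi
  have hyj : 0 < b*rj := lt_of_lt_of_le hR0 hjout
  have lab : Real.log a ≤ Real.log b := Real.log_le_log ha hab
  have f1 : 2*Real.log (b*rj) ≤ Real.log (1+(b*rj)^2) := by
    have h := Real.log_le_log (by positivity) (show (b*rj)^2 ≤ 1+(b*rj)^2 by linarith)
    rwa [Real.log_pow, Nat.cast_ofNat] at h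
  have f2 : Real.log a + Real.log (1+(b*rj)^2)
      ≤ Real.log b + (Real.log R + Real.log (1+(a*ri)^2)/2) := by
    have h := Real.log_le_log (by positivity) hsp
    rwa [stmt11aux_logmul ha hTj, stmt11aux_logmul hb (mul_pos hR0 hsTi),
      stmt11aux_logmul hR0 hsTi, Real.log_sqrt hTi.le] at h
  have f7 : 2*Real.log R ≤ Real.log (1+(b*rj)^2) := by
    have h1 : R^2 ≤ 1+(b*rj)^2 := by
      nlinarith [pow_le_pow_left₀ hR0.le hjout 2]
    have h := Real.log_le_log (by positivity) h1
    rwa [Real.log_pow, Nat.cast_ofNat] at h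
  have key : (n-2*s)/2 * Real.log a - 2*s*Real.log (1+(b*rj)^2)
      - s*Real.log (1+(a*ri)^2) + (n-2*s)*Real.log (b*rj)
      ≤ (8*s+2*n)*Real.log 2 + (n-2*s)/2*Real.log b + (n-8*s)*Real.log R := by
    rcases le_total (4*s) ((n-2*s)/2) with hms | hms
    · have f5 : Real.log (1+(a*ri)^2) ≤ 2*(Real.log 3 + Real.log R) := by
        have h1 : 1+(a*ri)^2 ≤ (3*R)^2 := by
          nlinarith [pow_le_pow_left₀ (mul_nonneg ha.le hri) hi.le 2]
        have h := Real.log_le_log hTi h1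
        rwa [Real.log_pow, Nat.cast_ofNat, stmt11aux_logmul (by norm_num : (0:ℝ) < 3) hR0] at h
      have p1 := mul_le_mul_of_nonneg_left f1 (by linarith : (0:ℝ) ≤ (n-2*s)/2)
      have p2 := mul_le_mul_of_nonneg_left f2 (by linarith : (0:ℝ) ≤ (n-2*s)/2 - 2*s)
      have p3 := mul_le_mul_of_nonneg_left f5 (by linarith : (0:ℝ) ≤ ((n-2*s)/2 - 4*s)/2)
      have p4 := mul_le_mul_of_nonneg_left lab (by linarith : (0:ℝ) ≤ 2*s)
      have p5 := mul_le_mul_of_nonneg_left stmt11aux_l3 (by linarith : (0:ℝ) ≤ (n-2*s)/2 - 4*s)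
      have p6 : 0 ≤ (2*n - 2*((n-2*s)/2 - 4*s)) * Real.log 2 :=
        mul_nonneg (by linarith) stmt11aux_l2
      have p7 : 0 ≤ (8*s) * Real.log 2 := mul_nonneg (by linarith) stmt11aux_l2
      nlinarith [p1, p2, p3, p4, p5, p6, p7]
    · have q1 : Real.log R ≤ Real.log b - Real.log a + Real.log (1+(a*ri)^2)/2 := by
        linarith
      have p1 := mul_le_mul_of_nonneg_left f1 (by linarith : (0:ℝ) ≤ (n-2*s)/2)
      have p2 := mul_le_mul_of_nonneg_left f2 (by linarith : (0:ℝ) ≤ (n-2*s)/2 - 2*s)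
      have p3 := mul_le_mul_of_nonneg_left q1 (by linarith : (0:ℝ) ≤ 4*s - (n-2*s)/2)
      have p4 := mul_le_mul_of_nonneg_left lab (by linarith : (0:ℝ) ≤ (n-2*s)/2 - 2*s)
      have p5 : 0 ≤ (8*s+2*n) * Real.log 2 := mul_nonneg (by linarith) stmt11aux_l2
      nlinarith [p1, p2, p3, p4, p5]
  simp only [Real.rpow_def_of_pos ha, Real.rpow_def_of_pos hb, Real.rpow_def_of_pos hR0,
    Real.rpow_def_of_pos hTi, Real.rpow_def_of_pos hTj, Real.rpow_def_of_pos hyj,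
    Real.rpow_def_of_pos (by norm_num : (0:ℝ) < 2)]
  simp only [← Real.exp_add]
  rw [Real.exp_le_exp]
  nlinarith [key]

lemma stmt11aux_iia (s n a b d ri rj R K : ℝ) (hs : 0 < s) (h6 : 6*s < n)
    (ha : 0 < a) (hab : a ≤ b) (hd : 0 ≤ d) (hri : 0 ≤ ri) (hrj : 0 ≤ rj)
    (htri : d ≤ ri + rj) (hR1 : 1 ≤ 2*R)
    (hKm : K ≤ max (Real.sqrt (b/a)) (Real.sqrt (a*b) * d)) (hRK : 2*R ≤ K)
    (hiout : R ≤ a * ri) (hj : b * rj < R) :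
    b ^ (2*s) * (1 + (b*rj)^2) ^ (-(2*s)) *
        (a ^ ((n-2*s)/2) * R ^ (-(4*s)) * (a*ri) ^ (4*s-n))
      ≤ 2 ^ (8*s+2*n) *
        (K ^ (-(2*s)) * (b ^ ((n+2*s)/2) * R ^ (2*s-n) * (1 + (b*rj)^2) ^ (-(2*s)))) := by
  have hb : 0 < b := lt_of_lt_of_le ha hab
  have hR0 : 0 < R := by linarith
  have hK0 : 0 < K := by linarith
  have hn : 0 < n := by linarith
  have hTi : (0:ℝ) < 1 + (a*ri)^2 := by positivity
  have hTj : (0:ℝ) < 1 + (b*rj)^2 := by positivity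
  have hyi : 0 < a*ri := lt_of_lt_of_le hR0 hiout
  have lab : Real.log a ≤ Real.log b := Real.log_le_log ha hab
  have lyiR : Real.log R ≤ Real.log (a*ri) := Real.log_le_log hR0 hiout
  have lR2 : -Real.log 2 ≤ Real.log R := by
    have h := Real.log_le_log (by norm_num : (0:ℝ) < 2⁻¹) (by linarith : (2:ℝ)⁻¹ ≤ R)
    rwa [Real.log_inv] at h
  have key : (n-2*s)/2 * Real.log a + 2*s*Real.log K + (4*s-n)*Real.log (a*ri)
      ≤ (8*s+2*n)*Real.log 2 + (n-2*s)/2*Real.log b + (6*s-n)*Real.log R := by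
    rcases le_max_iff.mp hKm with hc | hc
    · have lK : Real.log K ≤ (Real.log b - Real.log a)/2 := by
        have h1 := Real.log_le_log hK0 hc
        rwa [Real.log_sqrt (by positivity), Real.log_div hb.ne' ha.ne'] at h1
      have p1 := mul_le_mul_of_nonneg_left lK (by linarith : (0:ℝ) ≤ 2*s)
      have p2 := mul_le_mul_of_nonneg_left lyiR (by linarith : (0:ℝ) ≤ n - 4*s)
      have p3 : 0 ≤ ((n-2*s)/2 - s) * (Real.log b - Real.log a) :=
        mul_nonneg (by linarith) (by linarith)
      have p4 : 0 ≤ (2*s) * (Real.log R + Real.log 2) :=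
        mul_nonneg (by linarith) (by linarith)
      have p5 : 0 ≤ (6*s+2*n) * Real.log 2 := mul_nonneg (by linarith) stmt11aux_l2
      nlinarith [p1, p2, p3, p4, p5]
    · obtain ⟨hd0, hrj2, hri2⟩ := stmt11aux_geo ha hab hd htri hRK hK0 hc hj
      have lK : Real.log K ≤ (Real.log a + Real.log b)/2 + Real.log d := by
        have h1 := Real.log_le_log hK0 hc
        rwa [stmt11aux_logmul (Real.sqrt_pos.mpr (by positivity)) hd0,
          Real.log_sqrt (by positivity), stmt11aux_logmul ha hb] at h1
      have lyi_lb : Real.log a + (Real.log d - Real.log 2) ≤ Real.log (a*ri) := by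
        have h1 : a*(d/2) ≤ a*ri := mul_le_mul_of_nonneg_left hri2 ha.le
        have h2 := Real.log_le_log (by positivity) h1
        rwa [stmt11aux_logmul ha (by positivity : (0:ℝ) < d/2),
          Real.log_div hd0.ne' (by norm_num : (2:ℝ) ≠ 0)] at h2
      have p1 := mul_le_mul_of_nonneg_left lK (by linarith : (0:ℝ) ≤ 2*s)
      have p2 := mul_le_mul_of_nonneg_left lyiR (by linarith : (0:ℝ) ≤ n - 6*s)
      have p3 := mul_le_mul_of_nonneg_left lyi_lb (by linarith : (0:ℝ) ≤ 2*s)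
      have p4 : 0 ≤ ((n-2*s)/2 - s) * (Real.log b - Real.log a) :=
        mul_nonneg (by linarith) (by linarith)
      have p5 : 0 ≤ (6*s+2*n) * Real.log 2 := mul_nonneg (by linarith) stmt11aux_l2
      nlinarith [p1, p2, p3, p4, p5]
  simp only [Real.rpow_def_of_pos ha, Real.rpow_def_of_pos hb, Real.rpow_def_of_pos hR0,
    Real.rpow_def_of_pos hK0, Real.rpow_def_of_pos hTi, Real.rpow_def_of_pos hTj,
    Real.rpow_def_of_pos hyi, Real.rpow_def_of_pos (by norm_num : (0:ℝ) < 2)]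
  simp only [← Real.exp_add]
  rw [Real.exp_le_exp]
  nlinarith [key]

lemma stmt11aux_iib1 (s n a b d ri rj R K : ℝ) (hs : 0 < s) (h6 : 6*s < n)
    (ha : 0 < a) (hab : a ≤ b) (hR1 : 1 ≤ 2*R)
    (hiout : R ≤ a * ri)
    (hsp : b*(R*(a*ri)) ≤ a*(1+(b*rj)^2)) :
    b ^ (2*s) * (1 + (b*rj)^2) ^ (-(2*s)) *
        (a ^ ((n-2*s)/2) * R ^ (-(4*s)) * (a*ri) ^ (4*s-n))
      ≤ 2 ^ (8*s+2*n) *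
        (R ^ (-(2*s)) * (a ^ ((n+2*s)/2) * R ^ (-(4*s)) * (a*ri) ^ (2*s-n))) := by
  have hb : 0 < b := lt_of_lt_of_le ha hab
  have hR0 : 0 < R := by linarith
  have hn : 0 < n := by linarith
  have hTj : (0:ℝ) < 1 + (b*rj)^2 := by positivity
  have hyi : 0 < a*ri := lt_of_lt_of_le hR0 hiout
  have lsp := Real.log_le_log (by positivity) hsp
  rw [stmt11aux_logmul hb (mul_pos hR0 hyi), stmt11aux_logmul hR0 hyi,
    stmt11aux_logmul ha hTj] at lsp
  have p1 := mul_le_mul_of_nonneg_left lsp (by linarith : (0:ℝ) ≤ 2*s)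
  have p5 : 0 ≤ (8*s+2*n) * Real.log 2 := mul_nonneg (by linarith) stmt11aux_l2
  simp only [Real.rpow_def_of_pos ha, Real.rpow_def_of_pos hb, Real.rpow_def_of_pos hR0,
    Real.rpow_def_of_pos hTj, Real.rpow_def_of_pos hyi,
    Real.rpow_def_of_pos (by norm_num : (0:ℝ) < 2)]
  simp only [← Real.exp_add]
  rw [Real.exp_le_exp]
  nlinarith [p1, p5]

lemma stmt11aux_iib2 (s n a b d ri rj R K : ℝ) (hs : 0 < s) (h6 : 6*s < n)
    (ha : 0 < a) (hab : a ≤ b) (hR1 : 1 ≤ 2*R)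
    (hiout : R ≤ a * ri) (hjout : R ≤ b*rj)
    (hsp : a*(1+(b*rj)^2) ≤ b*(R*(a*ri))) :
    b ^ (2*s) * (1 + (b*rj)^2) ^ (-(2*s)) *
        (a ^ ((n-2*s)/2) * R ^ (-(4*s)) * (a*ri) ^ (4*s-n))
      ≤ 2 ^ (8*s+2*n) *
        (R ^ (-(2*s)) * (b ^ ((n+2*s)/2) * R ^ (-(4*s)) * (b*rj) ^ (2*s-n))) := by
  have hb : 0 < b := lt_of_lt_of_le ha hab
  have hR0 : 0 < R := by linarith
  have hn : 0 < n := by linarith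
  have hTj : (0:ℝ) < 1 + (b*rj)^2 := by positivity
  have hyi : 0 < a*ri := lt_of_lt_of_le hR0 hiout
  have hyj : 0 < b*rj := lt_of_lt_of_le hR0 hjout
  have lab : Real.log a ≤ Real.log b := Real.log_le_log ha hab
  have f1 : 2*Real.log (b*rj) ≤ Real.log (1+(b*rj)^2) := by
    have h := Real.log_le_log (by positivity) (show (b*rj)^2 ≤ 1+(b*rj)^2 by linarith)
    rwa [Real.log_pow, Nat.cast_ofNat] at h
  have f2 : Real.log a + Real.log (1+(b*rj)^2)
      ≤ Real.log b + (Real.log R + Real.log (a*ri)) := by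
    have h := Real.log_le_log (by positivity) hsp
    rwa [stmt11aux_logmul ha hTj, stmt11aux_logmul hb (mul_pos hR0 hyi),
      stmt11aux_logmul hR0 hyi] at h
  have f3 : Real.log R ≤ Real.log (a*ri) := Real.log_le_log hR0 hiout
  have p1 := mul_le_mul_of_nonneg_left f1 (by linarith : (0:ℝ) ≤ (n-2*s)/2)
  have p2 := mul_le_mul_of_nonneg_left f2 (by linarith : (0:ℝ) ≤ (n-2*s)/2 - 2*s)
  have p3 := mul_le_mul_of_nonneg_left f3 (by linarith : (0:ℝ) ≤ (n-2*s)/2)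
  have p4 := mul_le_mul_of_nonneg_left lab (by linarith : (0:ℝ) ≤ 2*s)
  have p5 : 0 ≤ (8*s+2*n) * Real.log 2 := mul_nonneg (by linarith) stmt11aux_l2
  simp only [Real.rpow_def_of_pos ha, Real.rpow_def_of_pos hb, Real.rpow_def_of_pos hR0,
    Real.rpow_def_of_pos hTj, Real.rpow_def_of_pos hyi, Real.rpow_def_of_pos hyj,
    Real.rpow_def_of_pos (by norm_num : (0:ℝ) < 2)]
  simp only [← Real.exp_add]
  rw [Real.exp_le_exp]
  nlinarith [p1, p2, p3, p4, p5]

lemma stmt11aux_iii (s n a b d ri rj R K : ℝ) (hs : 0 < s) (h6 : 6*s < n)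
    (ha : 0 < a) (hab : a ≤ b) (hd : 0 ≤ d) (hri : 0 ≤ ri) (hrj : 0 ≤ rj)
    (htri : d ≤ ri + rj) (hR1 : 1 ≤ 2*R)
    (hKm : K ≤ max (Real.sqrt (b/a)) (Real.sqrt (a*b) * d)) (hRK : 2*R ≤ K)
    (hj : b * rj < R) :
    a ^ (2*s) * (1 + (a*ri)^2) ^ (-(2*s)) *
        (b ^ ((n-2*s)/2) * R ^ (2*s-n) * (1 + (b*rj)^2) ^ (-s))
      ≤ 2 ^ (8*s+2*n) *
        (K ^ (-(2*s)) * (b ^ ((n+2*s)/2) * R ^ (2*s-n) * (1 + (b*rj)^2) ^ (-(2*s)))) := by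
  have hb : 0 < b := lt_of_lt_of_le ha hab
  have hR0 : 0 < R := by linarith
  have hK0 : 0 < K := by linarith
  have hn : 0 < n := by linarith
  have hTi : (0:ℝ) < 1 + (a*ri)^2 := by positivity
  have hTj : (0:ℝ) < 1 + (b*rj)^2 := by positivity
  have hsTj : 0 < Real.sqrt (1+(b*rj)^2) := Real.sqrt_pos.mpr hTj
  have hsqK : Real.sqrt (1+(b*rj)^2) ≤ (3/2)*K := by
    have h1 : (1:ℝ)+(b*rj)^2 ≤ (1+b*rj)^2 := by nlinarith [mul_nonneg hb.le hrj]
    have h2 : Real.sqrt (1+(b*rj)^2) ≤ 1+b*rj := by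
      have h3 := Real.sqrt_le_sqrt h1
      rwa [Real.sqrt_sq (by positivity)] at h3
    linarith
  have base : a * (K * Real.sqrt (1+(b*rj)^2)) ≤ 6 * (b * (1 + (a*ri)^2)) := by
    have h1 : a*(K*Real.sqrt (1+(b*rj)^2)) ≤ a*(K*((3/2)*K)) :=
      mul_le_mul_of_nonneg_left (mul_le_mul_of_nonneg_left hsqK hK0.le) ha.le
    rcases le_max_iff.mp hKm with hc | hc
    · have hK2 : K^2 ≤ b/a := by
        have h2 := pow_le_pow_left₀ hK0.le hc 2
        rwa [Real.sq_sqrt (by positivity : (0:ℝ) ≤ b/a)] at h2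
      have haK2 : a*K^2 ≤ b := by
        have h3 := mul_le_mul_of_nonneg_left hK2 ha.le
        rwa [mul_div_cancel₀ b ha.ne'] at h3
      nlinarith [h1, haK2, mul_nonneg hb.le (sq_nonneg (a*ri))]
    · obtain ⟨hd0, hrj2, hri2⟩ := stmt11aux_geo ha hab hd htri hRK hK0 hc hj
      have hK2 : K^2 ≤ a*b*d^2 := by
        have h2 := pow_le_pow_left₀ hK0.le hc 2
        rwa [mul_pow, Real.sq_sqrt (by positivity : (0:ℝ) ≤ a*b)] at h2
      have hadTi : (a*d)^2 ≤ 4*(1 + (a*ri)^2) := by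
        have h4 : (a*(d/2))^2 ≤ (a*ri)^2 :=
          pow_le_pow_left₀ (by positivity) (mul_le_mul_of_nonneg_left hri2 ha.le) 2
        nlinarith [h4]
      nlinarith [h1, mul_le_mul_of_nonneg_left hK2 ha.le,
        mul_le_mul_of_nonneg_left hadTi hb.le, mul_nonneg ha.le (sq_nonneg d)]
  have lbase := Real.log_le_log (by positivity) base
  rw [stmt11aux_logmul ha (mul_pos hK0 hsTj), stmt11aux_logmul hK0 hsTj,
    Real.log_sqrt hTj.le, stmt11aux_logmul (by norm_num : (0:ℝ) < 6) (mul_pos hb hTi),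
    stmt11aux_logmul hb hTi] at lbase
  have p1 := mul_le_mul_of_nonneg_left lbase (by linarith : (0:ℝ) ≤ 2*s)
  have p2 := mul_le_mul_of_nonneg_left stmt11aux_l6 (by linarith : (0:ℝ) ≤ 2*s)
  have p3 : 0 ≤ (2*s+2*n) * Real.log 2 := mul_nonneg (by linarith) stmt11aux_l2
  simp only [Real.rpow_def_of_pos ha, Real.rpow_def_of_pos hb, Real.rpow_def_of_pos hR0,
    Real.rpow_def_of_pos hK0, Real.rpow_def_of_pos hTi, Real.rpow_def_of_pos hTj,
    Real.rpow_def_of_pos (by norm_num : (0:ℝ) < 2)]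
  simp only [← Real.exp_add]
  rw [Real.exp_le_exp]
  nlinarith [p1, p2, p3]

lemma stmt11aux_iv1 (s n a b d ri rj R K : ℝ) (hs : 0 < s) (h6 : 6*s < n)
    (ha : 0 < a) (hab : a ≤ b) (hR1 : 1 ≤ 2*R)
    (hjout : R ≤ b*rj) (hrj : 0 ≤ rj)
    (hsp : (a*rj)*Real.sqrt (1+(a*d)^2) ≤ 9*(1+(a*ri)^2)) :
    a ^ (2*s) * (1 + (a*ri)^2) ^ (-(2*s)) *
        (b ^ ((n-2*s)/2) * R ^ (-(4*s)) * (b*rj) ^ (4*s-n))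
      ≤ 2 ^ (8*s+2*n) *
        ((1+(a*d)^2) ^ (-s) * (b ^ ((n+2*s)/2) * R ^ (-(4*s)) * (b*rj) ^ (2*s-n))) := by
  have hb : 0 < b := lt_of_lt_of_le ha hab
  have hR0 : 0 < R := by linarith
  have hn : 0 < n := by linarith
  have hTi : (0:ℝ) < 1 + (a*ri)^2 := by positivity
  have hP : (0:ℝ) < 1 + (a*d)^2 := by positivity
  have hyj : 0 < b*rj := lt_of_lt_of_le hR0 hjout
  have hrj0 : 0 < rj := by
    rcases lt_or_eq_of_le hrj with h | h
    · exact h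
    · exfalso; rw [← h] at hyj; simp at hyj
  have lsp : Real.log a + Real.log rj + Real.log (1+(a*d)^2)/2
      ≤ Real.log 9 + Real.log (1+(a*ri)^2) := by
    have h := Real.log_le_log (by positivity) hsp
    rwa [stmt11aux_logmul (mul_pos ha hrj0) (Real.sqrt_pos.mpr hP),
      stmt11aux_logmul ha hrj0, Real.log_sqrt hP.le,
      stmt11aux_logmul (by norm_num : (0:ℝ) < 9) hTi] at h
  have lyj : Real.log (b*rj) = Real.log b + Real.log rj := stmt11aux_logmul hb hrj0
  have p1 := mul_le_mul_of_nonneg_left lsp (by linarith : (0:ℝ) ≤ 2*s)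
  have p2 := mul_le_mul_of_nonneg_left stmt11aux_l9 (by linarith : (0:ℝ) ≤ 2*s)
  have p3 : 0 ≤ (2*n) * Real.log 2 := mul_nonneg (by linarith) stmt11aux_l2
  simp only [Real.rpow_def_of_pos ha, Real.rpow_def_of_pos hb, Real.rpow_def_of_pos hR0,
    Real.rpow_def_of_pos hTi, Real.rpow_def_of_pos hP, Real.rpow_def_of_pos hyj,
    Real.rpow_def_of_pos (by norm_num : (0:ℝ) < 2)]
  simp only [← Real.exp_add]
  rw [Real.exp_le_exp]
  nlinarith [p1, p2, p3, lyj]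

lemma stmt11aux_iv2in (s n a b d ri rj R K : ℝ) (hs : 0 < s) (h6 : 6*s < n)
    (ha : 0 < a) (hab : a ≤ b) (hd : 0 ≤ d) (hri : 0 ≤ ri) (hrj : 0 ≤ rj)
    (htri : d ≤ ri + rj) (htrj : rj ≤ ri + d) (hR1 : 1 ≤ 2*R)
    (hKm : K ≤ max (Real.sqrt (b/a)) (Real.sqrt (a*b) * d)) (hRK : 2*R ≤ K)
    (hjout : R ≤ b*rj)
    (hsp : 9*(1+(a*ri)^2) ≤ (a*rj)*Real.sqrt (1+(a*d)^2)) :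
    a ^ (2*s) * (1 + (a*ri)^2) ^ (-(2*s)) *
        (b ^ ((n-2*s)/2) * R ^ (-(4*s)) * (b*rj) ^ (4*s-n))
      ≤ 2 ^ (8*s+2*n) *
        ((1+(a*d)^2) ^ (-s) * (a ^ ((n+2*s)/2) * R ^ (2*s-n) * (1 + (a*ri)^2) ^ (-(2*s)))) := by
  have hb : 0 < b := lt_of_lt_of_le ha hab
  have hR0 : 0 < R := by linarith
  have hK0 : 0 < K := by linarith
  have hn : 0 < n := by linarith
  have hTi : (0:ℝ) < 1 + (a*ri)^2 := by positivity
  have hP : (0:ℝ) < 1 + (a*d)^2 := by positivity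
  have hyj : 0 < b*rj := lt_of_lt_of_le hR0 hjout
  have lab : Real.log a ≤ Real.log b := Real.log_le_log ha hab
  have hu2 : (Real.sqrt (1+(a*ri)^2))^2 = 1+(a*ri)^2 := Real.sq_sqrt hTi.le
  have hv2 : (Real.sqrt (1+(a*d)^2))^2 = 1+(a*d)^2 := Real.sq_sqrt hP.le
  have hari : a*ri ≤ Real.sqrt (1+(a*ri)^2) := by
    have h1 := Real.sqrt_le_sqrt (show (a*ri)^2 ≤ 1+(a*ri)^2 by linarith [sq_nonneg (a*ri)])
    rwa [Real.sqrt_sq (by positivity)] at h1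
  have had : a*d ≤ Real.sqrt (1+(a*d)^2) := by
    have h1 := Real.sqrt_le_sqrt (show (a*d)^2 ≤ 1+(a*d)^2 by linarith [sq_nonneg (a*d)])
    rwa [Real.sqrt_sq (by positivity)] at h1
  have harj : a*rj ≤ Real.sqrt (1+(a*ri)^2) + Real.sqrt (1+(a*d)^2) := by
    have h1 := mul_le_mul_of_nonneg_left htrj ha.le
    nlinarith [hari, had]
  have step2 : 9*(1+(a*ri)^2)
      ≤ (Real.sqrt (1+(a*ri)^2) + Real.sqrt (1+(a*d)^2))*Real.sqrt (1+(a*d)^2) :=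
    le_trans hsp (mul_le_mul_of_nonneg_right harj (Real.sqrt_nonneg _))
  have step3 : 5*(1+(a*ri)^2) ≤ 1+(a*d)^2 := by
    nlinarith [step2, sq_nonneg (Real.sqrt (1+(a*ri)^2) - Real.sqrt (1+(a*d)^2)), hu2, hv2]
  have step4a : 2*(a*ri) ≤ a*d := by
    nlinarith [step3, sq_nonneg (a*ri), mul_nonneg ha.le hri, mul_nonneg ha.le hd,
      sq_nonneg (a*d - 2*(a*ri)), sq_nonneg (a*d + 2*(a*ri))]
  have step4b : 2 ≤ a*d := by
    nlinarith [step3, sq_nonneg (a*ri), mul_nonneg ha.le hd]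
  have hd0 : 0 < d := by
    by_contra h
    push_neg at h
    nlinarith [mul_nonpos_of_nonneg_of_nonpos ha.le h]
  have hrj2 : d/2 ≤ rj := by
    have h1 : a*(2*ri) ≤ a*d := by linarith
    have h2 : 2*ri ≤ d := le_of_mul_le_mul_left h1 ha
    linarith
  have g1 : Real.log b + (Real.log d - Real.log 2) ≤ Real.log (b*rj) := by
    have h1 : b*(d/2) ≤ b*rj := mul_le_mul_of_nonneg_left hrj2 hb.le
    have h2 := Real.log_le_log (by positivity) h1
    rwa [stmt11aux_logmul hb (by positivity : (0:ℝ) < d/2),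
      Real.log_div hd0.ne' (by norm_num : (2:ℝ) ≠ 0)] at h2
  have g3 : Real.log (1+(a*d)^2) ≤ Real.log (5/4) + 2*(Real.log a + Real.log d) := by
    have h1 : 1+(a*d)^2 ≤ (5/4)*(a*d)^2 := by nlinarith [step4b]
    have h2 := Real.log_le_log hP h1
    rwa [stmt11aux_logmul (by norm_num : (0:ℝ) < 5/4) (by positivity : (0:ℝ) < (a*d)^2),
      Real.log_pow, Nat.cast_ofNat, stmt11aux_logmul ha hd0] at h2
  have hK2 : K^2 ≤ (b/a)*(1+(a*d)^2) := by
    rcases le_max_iff.mp hKm with hc | hc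
    · have h1 := pow_le_pow_left₀ hK0.le hc 2
      rw [Real.sq_sqrt (by positivity : (0:ℝ) ≤ b/a)] at h1
      nlinarith [h1, mul_nonneg (div_pos hb ha).le (sq_nonneg (a*d))]
    · have h1 := pow_le_pow_left₀ hK0.le hc 2
      rw [mul_pow, Real.sq_sqrt (by positivity : (0:ℝ) ≤ a*b)] at h1
      have h3 : a*b*d^2 = (b/a)*(a*d)^2 := by field_simp
      nlinarith [h1, h3, mul_pos (div_pos hb ha) hP, (div_pos hb ha)]
  have g2 : 2*(Real.log 2 + Real.log R) ≤ Real.log b - Real.log a + Real.log (1+(a*d)^2) := by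
    have h5 : (2*R)^2 ≤ (b/a)*(1+(a*d)^2) :=
      le_trans (pow_le_pow_left₀ (by linarith) hRK 2) hK2
    have h6 := Real.log_le_log (by positivity) h5
    rwa [Real.log_pow, Nat.cast_ofNat, stmt11aux_logmul (by norm_num : (0:ℝ) < 2) hR0,
      stmt11aux_logmul (div_pos hb ha) hP, Real.log_div hb.ne' ha.ne'] at h6
  have p1 := mul_le_mul_of_nonneg_left g1 (by linarith : (0:ℝ) ≤ n - 4*s)
  have p2 := mul_le_mul_of_nonneg_left g2 (by linarith : (0:ℝ) ≤ (n-2*s)/2 - 2*s)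
  have p3 := mul_le_mul_of_nonneg_left g3 (by linarith : (0:ℝ) ≤ (n-2*s)/2 - s)
  have p4 := mul_le_mul_of_nonneg_left stmt11aux_l54 (by linarith : (0:ℝ) ≤ (n-2*s)/2 - s)
  have p5 : 0 ≤ (8*s + 2*n - ((n-2*s)/2 + s)) * Real.log 2 :=
    mul_nonneg (by linarith) stmt11aux_l2
  simp only [Real.rpow_def_of_pos ha, Real.rpow_def_of_pos hb, Real.rpow_def_of_pos hR0,
    Real.rpow_def_of_pos hTi, Real.rpow_def_of_pos hP, Real.rpow_def_of_pos hyj,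
    Real.rpow_def_of_pos (by norm_num : (0:ℝ) < 2)]
  simp only [← Real.exp_add]
  rw [Real.exp_le_exp]
  nlinarith [p1, p2, p3, p4, p5]

lemma stmt11aux_iv2out (s n a b d ri rj R K : ℝ) (hs : 0 < s) (h6 : 6*s < n)
    (ha : 0 < a) (hab : a ≤ b) (hd : 0 ≤ d) (hri : 0 ≤ ri) (hrj : 0 ≤ rj)
    (htri : d ≤ ri + rj) (htrj : rj ≤ ri + d) (hR1 : 1 ≤ 2*R)
    (hjout : R ≤ b*rj) (hiout : R ≤ a*ri)
    (hsp : 9*(1+(a*ri)^2) ≤ (a*rj)*Real.sqrt (1+(a*d)^2)) :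
    a ^ (2*s) * (1 + (a*ri)^2) ^ (-(2*s)) *
        (b ^ ((n-2*s)/2) * R ^ (-(4*s)) * (b*rj) ^ (4*s-n))
      ≤ 2 ^ (8*s+2*n) *
        ((1+(a*d)^2) ^ (-s) * (a ^ ((n+2*s)/2) * R ^ (-(4*s)) * (a*ri) ^ (2*s-n))) := by
  have hb : 0 < b := lt_of_lt_of_le ha hab
  have hR0 : 0 < R := by linarith
  have hn : 0 < n := by linarith
  have hTi : (0:ℝ) < 1 + (a*ri)^2 := by positivity
  have hP : (0:ℝ) < 1 + (a*d)^2 := by positivity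
  have hyj : 0 < b*rj := lt_of_lt_of_le hR0 hjout
  have hyi : 0 < a*ri := lt_of_lt_of_le hR0 hiout
  have lab : Real.log a ≤ Real.log b := Real.log_le_log ha hab
  have hu2 : (Real.sqrt (1+(a*ri)^2))^2 = 1+(a*ri)^2 := Real.sq_sqrt hTi.le
  have hv2 : (Real.sqrt (1+(a*d)^2))^2 = 1+(a*d)^2 := Real.sq_sqrt hP.le
  have hari : a*ri ≤ Real.sqrt (1+(a*ri)^2) := by
    have h1 := Real.sqrt_le_sqrt (show (a*ri)^2 ≤ 1+(a*ri)^2 by linarith [sq_nonneg (a*ri)])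
    rwa [Real.sqrt_sq (by positivity)] at h1
  have had : a*d ≤ Real.sqrt (1+(a*d)^2) := by
    have h1 := Real.sqrt_le_sqrt (show (a*d)^2 ≤ 1+(a*d)^2 by linarith [sq_nonneg (a*d)])
    rwa [Real.sqrt_sq (by positivity)] at h1
  have harj : a*rj ≤ Real.sqrt (1+(a*ri)^2) + Real.sqrt (1+(a*d)^2) := by
    have h1 := mul_le_mul_of_nonneg_left htrj ha.le
    nlinarith [hari, had]
  have step2 : 9*(1+(a*ri)^2)
      ≤ (Real.sqrt (1+(a*ri)^2) + Real.sqrt (1+(a*d)^2))*Real.sqrt (1+(a*d)^2) :=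
    le_trans hsp (mul_le_mul_of_nonneg_right harj (Real.sqrt_nonneg _))
  have step3 : 5*(1+(a*ri)^2) ≤ 1+(a*d)^2 := by
    nlinarith [step2, sq_nonneg (Real.sqrt (1+(a*ri)^2) - Real.sqrt (1+(a*d)^2)), hu2, hv2]
  have step4a : 2*(a*ri) ≤ a*d := by
    nlinarith [step3, sq_nonneg (a*ri), mul_nonneg ha.le hri, mul_nonneg ha.le hd,
      sq_nonneg (a*d - 2*(a*ri)), sq_nonneg (a*d + 2*(a*ri))]
  have step4b : 2 ≤ a*d := by
    nlinarith [step3, sq_nonneg (a*ri), mul_nonneg ha.le hd]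
  have hd0 : 0 < d := by
    by_contra h
    push_neg at h
    nlinarith [mul_nonpos_of_nonneg_of_nonpos ha.le h]
  have hrj2 : d/2 ≤ rj := by
    have h1 : a*(2*ri) ≤ a*d := by linarith
    have h2 : 2*ri ≤ d := le_of_mul_le_mul_left h1 ha
    linarith
  have g1 : Real.log b + (Real.log d - Real.log 2) ≤ Real.log (b*rj) := by
    have h1 : b*(d/2) ≤ b*rj := mul_le_mul_of_nonneg_left hrj2 hb.le
    have h2 := Real.log_le_log (by positivity) h1
    rwa [stmt11aux_logmul hb (by positivity : (0:ℝ) < d/2),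
      Real.log_div hd0.ne' (by norm_num : (2:ℝ) ≠ 0)] at h2
  have g3 : Real.log (1+(a*d)^2) ≤ Real.log (5/4) + 2*(Real.log a + Real.log d) := by
    have h1 : 1+(a*d)^2 ≤ (5/4)*(a*d)^2 := by nlinarith [step4b]
    have h2 := Real.log_le_log hP h1
    rwa [stmt11aux_logmul (by norm_num : (0:ℝ) < 5/4) (by positivity : (0:ℝ) < (a*d)^2),
      Real.log_pow, Nat.cast_ofNat, stmt11aux_logmul ha hd0] at h2
  have f0 : 2*Real.log (a*ri) ≤ Real.log (1+(a*ri)^2) := by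
    have h := Real.log_le_log (by positivity) (show (a*ri)^2 ≤ 1+(a*ri)^2 by linarith)
    rwa [Real.log_pow, Nat.cast_ofNat] at h
  have fyi : Real.log (a*ri) ≤ Real.log a + Real.log d - Real.log 2 := by
    have h1 : a*ri ≤ (a*d)/2 := by linarith
    have h2 := Real.log_le_log hyi h1
    rwa [Real.log_div (mul_pos ha hd0).ne' (by norm_num : (2:ℝ) ≠ 0),
      stmt11aux_logmul ha hd0] at h2
  have p0 := mul_le_mul_of_nonneg_left f0 (by linarith : (0:ℝ) ≤ 2*s)
  have p1 := mul_le_mul_of_nonneg_left fyi (by linarith : (0:ℝ) ≤ n - 6*s)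
  have p2 := mul_le_mul_of_nonneg_left g1 (by linarith : (0:ℝ) ≤ n - 4*s)
  have p3 := mul_le_mul_of_nonneg_left g3 (by linarith : (0:ℝ) ≤ s)
  have p4 : 0 ≤ ((n-2*s)/2 - 2*s) * (Real.log b - Real.log a) :=
    mul_nonneg (by linarith) (by linarith)
  have p5 := mul_le_mul_of_nonneg_left stmt11aux_l54 (by linarith : (0:ℝ) ≤ s)
  have p6 : 0 ≤ (8*s + 2*n - 3*s) * Real.log 2 := mul_nonneg (by linarith) stmt11aux_l2
  simp only [Real.rpow_def_of_pos ha, Real.rpow_def_of_pos hb, Real.rpow_def_of_pos hR0,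
    Real.rpow_def_of_pos hTi, Real.rpow_def_of_pos hP, Real.rpow_def_of_pos hyj,
    Real.rpow_def_of_pos hyi, Real.rpow_def_of_pos (by norm_num : (0:ℝ) < 2)]
  simp only [← Real.exp_add]
  rw [Real.exp_le_exp]
  nlinarith [p0, p1, p2, p3, p4, p5, p6]

set_option maxHeartbeats 1600000 in
/-- (interaction estimates (3.26)-(3.29)), `n > 6s`. -/
theorem stmt11 (n ν : ℕ) (s : ℝ) (hs : 0 < s) (hν : 2 ≤ ν) (h6 : 6*s < (n:ℝ)) :
    ∃ δ₀ C : ℝ, 0 < δ₀ ∧ 0 < C ∧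
      ∀ δ : ℝ, 0 < δ → δ ≤ δ₀ →
      ∀ (z : Fin ν → Euc n) (lam : Fin ν → ℝ), (∀ i, 0 < lam i) →
        deltaInteracting n s ν z lam δ →
        ∀ i j : Fin ν, i ≠ j → lam i ≤ lam j →
        ∀ x : Euc n,
          ((bubble n s (z j) (lam j) x) ^ (pexp n s - 1) *
              win n s (scrR n ν z lam) (z i) (lam i) x ≤
            C * (interR (z i) (z j) (lam i) (lam j) ^ (-(2*s)) *
                vin n s (scrR n ν z lam) (z j) (lam j) x +
              scrR n ν z lam ^ (-(2*s)) * vout n s (scrR n ν z lam) (z j) (lam j) x +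
              scrR n ν z lam ^ (-(2*s)) * vin n s (scrR n ν z lam) (z i) (lam i) x)) ∧
          ((bubble n s (z j) (lam j) x) ^ (pexp n s - 1) *
              wout n s (scrR n ν z lam) (z i) (lam i) x ≤
            C * (interR (z i) (z j) (lam i) (lam j) ^ (-(2*s)) *
                vin n s (scrR n ν z lam) (z j) (lam j) x +
              scrR n ν z lam ^ (-(2*s)) * vout n s (scrR n ν z lam) (z j) (lam j) x +
              scrR n ν z lam ^ (-(2*s)) * vout n s (scrR n ν z lam) (z i) (lam i) x)) ∧
          ((bubble n s (z i) (lam i) x) ^ (pexp n s - 1) *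
              win n s (scrR n ν z lam) (z j) (lam j) x ≤
            C * (interR (z i) (z j) (lam i) (lam j) ^ (-(2*s)) *
              vin n s (scrR n ν z lam) (z j) (lam j) x)) ∧
          ((bubble n s (z i) (lam i) x) ^ (pexp n s - 1) *
              wout n s (scrR n ν z lam) (z j) (lam j) x ≤
            C * (jb ‖lam i • (z j - z i)‖ ^ (-(2*s)) *
              (vin n s (scrR n ν z lam) (z i) (lam i) x +
                vout n s (scrR n ν z lam) (z i) (lam i) x +
                vout n s (scrR n ν z lam) (z j) (lam j) x))) := by
  have hA : 0 < bubbleConst n s ^ (pexp n s - 1) :=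
    Real.rpow_pos_of_pos (stmt11aux_bubbleConst_pos hs h6) _
  have hCb : (0:ℝ) < 2 ^ (8*s+2*(n:ℝ)) := Real.rpow_pos_of_pos two_pos _
  refine ⟨1, bubbleConst n s ^ (pexp n s - 1) * 2 ^ (8*s+2*(n:ℝ)), one_pos,
    mul_pos hA hCb, ?_⟩
  intro δ hδ0 hδ1 z lam hlam hdel i j hij hlij x
  have ha := hlam i
  have hb := hlam j
  have hSlb : ∀ r ∈ {r : ℝ | ∃ k l : Fin ν, k ≠ l ∧ r = interR (z k) (z l) (lam k) (lam l)},
      (1:ℝ) ≤ r := by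
    rintro r ⟨k, l, hkl, rfl⟩
    simp only [interR]
    have h1 : (1:ℝ) ≤ max (Real.sqrt (lam k/lam l)) (Real.sqrt (lam l/lam k)) := by
      rcases le_total (lam k) (lam l) with h | h
      · have h2 : (1:ℝ) ≤ lam l / lam k := (one_le_div (hlam k)).mpr h
        have h3 : (1:ℝ) ≤ Real.sqrt (lam l/lam k) := by
          rw [show (1:ℝ) = Real.sqrt 1 by rw [Real.sqrt_one]]
          exact Real.sqrt_le_sqrt h2
        exact le_max_of_le_right h3
      · have h2 : (1:ℝ) ≤ lam k / lam l := (one_le_div (hlam l)).mpr h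
        have h3 : (1:ℝ) ≤ Real.sqrt (lam k/lam l) := by
          rw [show (1:ℝ) = Real.sqrt 1 by rw [Real.sqrt_one]]
          exact Real.sqrt_le_sqrt h2
        exact le_max_of_le_left h3
    exact le_trans h1 (le_max_left _ _)
  have h2R : 2 * scrR n ν z lam
      = sInf {r : ℝ | ∃ k l : Fin ν, k ≠ l ∧ r = interR (z k) (z l) (lam k) (lam l)} := by
    simp only [scrR]; ring
  have hR1 : 1 ≤ 2 * scrR n ν z lam := by
    rw [h2R]; exact le_csInf ⟨_, ⟨i, j, hij, rfl⟩⟩ hSlb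
  have hR0 : 0 < scrR n ν z lam := by linarith
  have hRK : 2 * scrR n ν z lam ≤ interR (z i) (z j) (lam i) (lam j) := by
    rw [h2R]; exact csInf_le ⟨1, hSlb⟩ ⟨i, j, hij, rfl⟩
  have hK0 : 0 < interR (z i) (z j) (lam i) (lam j) := by linarith
  have hKa : Real.sqrt (lam j/lam i) ≤ interR (z i) (z j) (lam i) (lam j) := by
    simp only [interR]; exact le_trans (le_max_right _ _) (le_max_left _ _)
  have hKb : Real.sqrt (lam i*lam j) * ‖z i - z j‖ ≤ interR (z i) (z j) (lam i) (lam j) := by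
    simp only [interR]; exact le_max_right _ _
  have hKm : interR (z i) (z j) (lam i) (lam j)
      ≤ max (Real.sqrt (lam j/lam i)) (Real.sqrt (lam i*lam j) * ‖z i - z j‖) := by
    simp only [interR]
    refine max_le (max_le (le_trans ?_ (le_max_left _ _)) (le_max_left _ _)) (le_max_right _ _)
    apply Real.sqrt_le_sqrt
    calc lam i/lam j ≤ 1 := (div_le_one hb).mpr hlij
      _ ≤ lam j/lam i := (one_le_div ha).mpr hlij
  have htri : ‖z i - z j‖ ≤ ‖x - z i‖ + ‖x - z j‖ := by
    have h := dist_triangle (z i) x (z j)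
    rw [dist_eq_norm, dist_eq_norm, dist_eq_norm, norm_sub_rev (z i) x] at h
    exact h
  have htrj : ‖x - z j‖ ≤ ‖x - z i‖ + ‖z i - z j‖ := by
    have h := dist_triangle x (z i) (z j)
    rw [dist_eq_norm, dist_eq_norm, dist_eq_norm] at h
    exact h
  have hvinj := stmt11aux_vin_nonneg s (scrR n ν z lam) (z j) (lam j) x hb.le hR0.le
  have hvini := stmt11aux_vin_nonneg s (scrR n ν z lam) (z i) (lam i) x ha.le hR0.le
  have hvoutj := stmt11aux_vout_nonneg s (scrR n ν z lam) (z j) (lam j) x hb.le hR0.le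
  have hvouti := stmt11aux_vout_nonneg s (scrR n ν z lam) (z i) (lam i) x ha.le hR0.le
  have hKc : 0 ≤ interR (z i) (z j) (lam i) (lam j) ^ (-(2*s)) := Real.rpow_nonneg hK0.le _
  have hRc : 0 ≤ scrR n ν z lam ^ (-(2*s)) := Real.rpow_nonneg hR0.le _
  have hPc : 0 ≤ (1+(lam i*‖z i - z j‖)^2) ^ (-s) := Real.rpow_nonneg (by positivity) _
  have hC0 : 0 ≤ bubbleConst n s ^ (pexp n s - 1) * 2 ^ (8*s+2*(n:ℝ)) :=
    (mul_pos hA hCb).le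
  refine ⟨?_, ?_, ?_, ?_⟩
  · -- (i)
    rw [stmt11aux_bubble_pow n s hs h6 (z j) x (lam j) hb]
    by_cases hi : lam i * ‖x - z i‖ < scrR n ν z lam
    · by_cases hj : lam j * ‖x - z j‖ < scrR n ν z lam
      · rw [stmt11aux_win_eq h6 hi, stmt11aux_vin_eq h6 hj]
        have key := stmt11aux_ia s (n:ℝ) (lam i) (lam j) ‖z i - z j‖ ‖x - z i‖ ‖x - z j‖
          (scrR n ν z lam) (interR (z i) (z j) (lam i) (lam j)) hs h6 ha hlij
          (norm_nonneg _) (norm_nonneg _) (norm_nonneg _) htri hR1 hKa hKb hKm hRK hi hj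
        nlinarith [mul_le_mul_of_nonneg_left key hA.le,
          mul_nonneg (mul_nonneg hC0 hRc) hvoutj, mul_nonneg (mul_nonneg hC0 hRc) hvini]
      · have hjout := not_lt.mp hj
        rcases le_total (lam j*(scrR n ν z lam*Real.sqrt (1+(lam i*‖x - z i‖)^2)))
            (lam i*(1+(lam j*‖x - z j‖)^2)) with hsp | hsp
        · rw [stmt11aux_win_eq h6 hi, stmt11aux_vin_eq h6 hi]
          have key := stmt11aux_ib1 s (n:ℝ) (lam i) (lam j) ‖z i - z j‖ ‖x - z i‖ ‖x - z j‖
            (scrR n ν z lam) (interR (z i) (z j) (lam i) (lam j)) hs h6 ha hlij hR1 hsp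
          nlinarith [mul_le_mul_of_nonneg_left key hA.le,
            mul_nonneg (mul_nonneg hC0 hKc) hvinj, mul_nonneg (mul_nonneg hC0 hRc) hvoutj]
        · rw [stmt11aux_win_eq h6 hi, stmt11aux_vout_eq h6 hjout]
          have key := stmt11aux_ib2 s (n:ℝ) (lam i) (lam j) ‖z i - z j‖ ‖x - z i‖ ‖x - z j‖
            (scrR n ν z lam) (interR (z i) (z j) (lam i) (lam j)) hs h6 ha hlij
            (norm_nonneg _) hR1 hi hjout hsp
          nlinarith [mul_le_mul_of_nonneg_left key hA.le,
            mul_nonneg (mul_nonneg hC0 hKc) hvinj, mul_nonneg (mul_nonneg hC0 hRc) hvini]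
    · rw [stmt11aux_win_zero h6 hi, mul_zero]
      exact mul_nonneg hC0 (add_nonneg (add_nonneg (mul_nonneg hKc hvinj)
        (mul_nonneg hRc hvoutj)) (mul_nonneg hRc hvini))
  · -- (ii)
    rw [stmt11aux_bubble_pow n s hs h6 (z j) x (lam j) hb]
    by_cases hi : scrR n ν z lam ≤ lam i * ‖x - z i‖
    · rw [stmt11aux_wout_eq h6 hi]
      by_cases hj : lam j * ‖x - z j‖ < scrR n ν z lam
      · rw [stmt11aux_vin_eq h6 hj]
        have key := stmt11aux_iia s (n:ℝ) (lam i) (lam j) ‖z i - z j‖ ‖x - z i‖ ‖x - z j‖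
          (scrR n ν z lam) (interR (z i) (z j) (lam i) (lam j)) hs h6 ha hlij
          (norm_nonneg _) (norm_nonneg _) (norm_nonneg _) htri hR1 hKm hRK hi hj
        nlinarith [mul_le_mul_of_nonneg_left key hA.le,
          mul_nonneg (mul_nonneg hC0 hRc) hvoutj, mul_nonneg (mul_nonneg hC0 hRc) hvouti]
      · have hjout := not_lt.mp hj
        rcases le_total (lam j*(scrR n ν z lam*(lam i*‖x - z i‖)))
            (lam i*(1+(lam j*‖x - z j‖)^2)) with hsp | hsp
        · rw [stmt11aux_vout_eq h6 hi]
          have key := stmt11aux_iib1 s (n:ℝ) (lam i) (lam j) ‖z i - z j‖ ‖x - z i‖ ‖x - z j‖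
            (scrR n ν z lam) (interR (z i) (z j) (lam i) (lam j)) hs h6 ha hlij hR1 hi hsp
          nlinarith [mul_le_mul_of_nonneg_left key hA.le,
            mul_nonneg (mul_nonneg hC0 hKc) hvinj, mul_nonneg (mul_nonneg hC0 hRc) hvoutj]
        · rw [stmt11aux_vout_eq h6 hjout]
          have key := stmt11aux_iib2 s (n:ℝ) (lam i) (lam j) ‖z i - z j‖ ‖x - z i‖ ‖x - z j‖
            (scrR n ν z lam) (interR (z i) (z j) (lam i) (lam j)) hs h6 ha hlij hR1 hi hjout hsp
          nlinarith [mul_le_mul_of_nonneg_left key hA.le,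
            mul_nonneg (mul_nonneg hC0 hKc) hvinj, mul_nonneg (mul_nonneg hC0 hRc) hvouti]
    · rw [stmt11aux_wout_zero h6 hi, mul_zero]
      exact mul_nonneg hC0 (add_nonneg (add_nonneg (mul_nonneg hKc hvinj)
        (mul_nonneg hRc hvoutj)) (mul_nonneg hRc hvouti))
  · -- (iii)
    rw [stmt11aux_bubble_pow n s hs h6 (z i) x (lam i) ha]
    by_cases hj : lam j * ‖x - z j‖ < scrR n ν z lam
    · rw [stmt11aux_win_eq h6 hj, stmt11aux_vin_eq h6 hj]
      have key := stmt11aux_iii s (n:ℝ) (lam i) (lam j) ‖z i - z j‖ ‖x - z i‖ ‖x - z j‖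
        (scrR n ν z lam) (interR (z i) (z j) (lam i) (lam j)) hs h6 ha hlij
        (norm_nonneg _) (norm_nonneg _) (norm_nonneg _) htri hR1 hKm hRK hj
      nlinarith [mul_le_mul_of_nonneg_left key hA.le]
    · rw [stmt11aux_win_zero h6 hj, mul_zero]
      exact mul_nonneg hC0 (mul_nonneg hKc hvinj)
  · -- (iv)
    rw [stmt11aux_bubble_pow n s hs h6 (z i) x (lam i) ha,
      norm_smul, Real.norm_eq_abs, abs_of_pos ha, norm_sub_rev (z j) (z i), stmt11aux_jb_n2s]
    by_cases hj : scrR n ν z lam ≤ lam j * ‖x - z j‖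
    · rw [stmt11aux_wout_eq h6 hj]
      rcases le_total ((lam i*‖x - z j‖)*Real.sqrt (1+(lam i*‖z i - z j‖)^2))
          (9*(1+(lam i*‖x - z i‖)^2)) with hsp | hsp
      · rw [stmt11aux_vout_eq h6 hj]
        have key := stmt11aux_iv1 s (n:ℝ) (lam i) (lam j) ‖z i - z j‖ ‖x - z i‖ ‖x - z j‖
          (scrR n ν z lam) (interR (z i) (z j) (lam i) (lam j)) hs h6 ha hlij hR1 hj
          (norm_nonneg _) hsp
        nlinarith [mul_le_mul_of_nonneg_left key hA.le,
          mul_nonneg (mul_nonneg hC0 hPc) hvini, mul_nonneg (mul_nonneg hC0 hPc) hvouti]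
      · by_cases hix : lam i * ‖x - z i‖ < scrR n ν z lam
        · rw [stmt11aux_vin_eq h6 hix]
          have key := stmt11aux_iv2in s (n:ℝ) (lam i) (lam j) ‖z i - z j‖ ‖x - z i‖ ‖x - z j‖
            (scrR n ν z lam) (interR (z i) (z j) (lam i) (lam j)) hs h6 ha hlij
            (norm_nonneg _) (norm_nonneg _) (norm_nonneg _) htri htrj hR1 hKm hRK hj hsp
          nlinarith [mul_le_mul_of_nonneg_left key hA.le,
            mul_nonneg (mul_nonneg hC0 hPc) hvouti, mul_nonneg (mul_nonneg hC0 hPc) hvoutj]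
        · have hio := not_lt.mp hix
          rw [stmt11aux_vout_eq h6 hio]
          have key := stmt11aux_iv2out s (n:ℝ) (lam i) (lam j) ‖z i - z j‖ ‖x - z i‖ ‖x - z j‖
            (scrR n ν z lam) (interR (z i) (z j) (lam i) (lam j)) hs h6 ha hlij
            (norm_nonneg _) (norm_nonneg _) (norm_nonneg _) htri htrj hR1 hj hio hsp
          nlinarith [mul_le_mul_of_nonneg_left key hA.le,
            mul_nonneg (mul_nonneg hC0 hPc) hvini, mul_nonneg (mul_nonneg hC0 hPc) hvoutj]
    · rw [stmt11aux_wout_zero h6 hj, mul_zero]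
      exact mul_nonneg hC0 (mul_nonneg hPc (add_nonneg (add_nonneg hvini hvouti) hvoutj))

end
end

section
/- Let n ∈ ℕ, s ∈ (0, n/2), α ∈ (0, n), β > 2s, N ∈ ℕ, and let 𝔶_1, …, 𝔶_N be distinct points of ℝⁿ. Suppose f and V are functions such that f(y) = ∫_{ℝⁿ} Φ_{n,s}(y−ω) V(ω) f(ω) dω for every y ∈ ℝⁿ \ {𝔶_1,…,𝔶_N}, and there exists C > 0 with |f(y)| ≤ C(1 + Σ_{i=1}^N |y−𝔶_i|^{−α}) and |V(y)| ≤ C⟨y⟩^{−β} for all y ∈ ℝⁿ \ {𝔶_1,…,𝔶_N}. Then f is bounded on ℝⁿ \ {𝔶_1,…,𝔶_N} (i.e., f ∈ L^∞(ℝⁿ)). -/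
open MeasureTheory Real Filter
open scoped FourierTransform ENNReal Topology

noncomputable section

section AuxRemovability
open Set Metric

lemma aux_ball_int {n : ℕ} (hn : 0 < n) {q : ℝ} (hq : -(n:ℝ) < q) (hq0 : q < 0) :
    IntegrableOn (fun x : Euc n => ‖x‖ ^ q) (ball (0 : Euc n) 1) := by
  haveI : Nonempty (Fin n) := ⟨⟨0, hn⟩⟩
  have hmeas : Measurable (fun x : Euc n => ‖x‖ ^ q) := by fun_prop
  have hpos : ∀ x : Euc n, 0 ≤ ‖x‖ ^ q := fun x => rpow_nonneg (norm_nonneg _) _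
  constructor
  · exact hmeas.aestronglyMeasurable.restrict
  · rw [hasFiniteIntegral_iff_norm]
    have hnn : (fun x : Euc n => ENNReal.ofReal ‖‖x‖ ^ q‖) = fun x => ENNReal.ofReal (‖x‖ ^ q) := by
      funext x; rw [Real.norm_of_nonneg (hpos x)]
    rw [hnn, lintegral_eq_lintegral_meas_le _ (Filter.Eventually.of_forall hpos)
      (hmeas.aemeasurable.restrict)]
    set B := volume (ball (0 : Euc n) 1) with hB
    have hBlt : B < ⊤ := measure_ball_lt_top
    have keyB : ∀ t : ℝ, (volume.restrict (ball (0 : Euc n) 1)) {a : Euc n | t ≤ ‖a‖ ^ q} ≤ B :=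
      fun t => (measure_mono (subset_univ _)).trans (by rw [Measure.restrict_apply_univ])
    have key : ∀ t : ℝ, 0 < t →
        (volume.restrict (ball (0 : Euc n) 1)) {a : Euc n | t ≤ ‖a‖ ^ q}
          ≤ ENNReal.ofReal (t ^ ((n:ℝ)/q)) * B := by
      intro t ht
      have hsub : {a : Euc n | t ≤ ‖a‖ ^ q} ⊆ closedBall 0 (t ^ q⁻¹) := by
        intro a ha
        simp only [mem_setOf_eq] at ha
        rcases eq_or_ne a 0 with rfl | ha0
        · simp only [norm_zero] at ha
          rw [Real.zero_rpow hq0.ne] at ha; linarith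
        · have hna : 0 < ‖a‖ := norm_pos_iff.mpr ha0
          have h2 : (‖a‖ ^ q) ^ q⁻¹ ≤ t ^ q⁻¹ :=
            Real.rpow_le_rpow_of_nonpos ht ha (inv_nonpos.mpr hq0.le)
          rw [← Real.rpow_mul (norm_nonneg a), mul_inv_cancel₀ hq0.ne, Real.rpow_one] at h2
          exact mem_closedBall_zero_iff.mpr h2
      have hval : ((t ^ q⁻¹ : ℝ)) ^ (n : ℕ) = t ^ ((n:ℝ)/q) := by
        rw [← Real.rpow_natCast (t ^ q⁻¹) n, ← Real.rpow_mul ht.le]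
        congr 1
        field_simp
      calc (volume.restrict (ball (0 : Euc n) 1)) {a : Euc n | t ≤ ‖a‖ ^ q}
          ≤ volume (closedBall (0 : Euc n) (t ^ q⁻¹)) :=
            (Measure.restrict_apply_le _ _).trans (measure_mono hsub)
        _ = ENNReal.ofReal (t ^ ((n:ℝ)/q)) * B := by
            rw [Measure.addHaar_closedBall _ _ (by positivity), finrank_euclideanSpace_fin, hval]
    have hexp : (n:ℝ)/q < -1 := by
      rw [div_lt_iff_of_neg hq0]
      linarith
    calc ∫⁻ t in Ioi (0:ℝ), (volume.restrict (ball (0 : Euc n) 1)) {a : Euc n | t ≤ ‖a‖ ^ q}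
        ≤ ∫⁻ t in Ioc (0:ℝ) 1 ∪ Ioi 1, (volume.restrict (ball (0 : Euc n) 1)) {a | t ≤ ‖a‖ ^ q} :=
          lintegral_mono_set Ioi_subset_Ioc_union_Ioi
      _ ≤ (∫⁻ t in Ioc (0:ℝ) 1, (volume.restrict (ball (0 : Euc n) 1)) {a | t ≤ ‖a‖ ^ q}) +
          ∫⁻ t in Ioi (1:ℝ), (volume.restrict (ball (0 : Euc n) 1)) {a | t ≤ ‖a‖ ^ q} :=
          lintegral_union_le _ _ _
      _ < ⊤ := by
          refine ENNReal.add_lt_top.2 ⟨?_, ?_⟩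
          · calc (∫⁻ t in Ioc (0:ℝ) 1, (volume.restrict (ball (0 : Euc n) 1)) {a | t ≤ ‖a‖ ^ q})
                ≤ ∫⁻ _ in Ioc (0:ℝ) 1, B := setLIntegral_mono' measurableSet_Ioc fun t _ => keyB t
              _ < ⊤ := by
                  rw [setLIntegral_const]
                  exact ENNReal.mul_lt_top measure_ball_lt_top (by simp)
          · calc (∫⁻ t in Ioi (1:ℝ), (volume.restrict (ball (0 : Euc n) 1)) {a | t ≤ ‖a‖ ^ q})
                ≤ ∫⁻ t in Ioi (1:ℝ), ENNReal.ofReal (t ^ ((n:ℝ)/q)) * B :=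
                  setLIntegral_mono' measurableSet_Ioi fun t ht => key t (lt_trans one_pos ht)
              _ = (∫⁻ t in Ioi (1:ℝ), ENNReal.ofReal (t ^ ((n:ℝ)/q))) * B :=
                  lintegral_mul_const' _ _ hBlt.ne
              _ < ⊤ := ENNReal.mul_lt_top
                  ((integrableOn_Ioi_rpow_of_lt hexp one_pos).setLIntegral_lt_top)
                  hBlt

noncomputable def CB (n : ℕ) (q : ℝ) : ℝ := ∫ x in ball (0:Euc n) 1, ‖x‖ ^ q

lemma CB_nonneg (n : ℕ) (q : ℝ) : 0 ≤ CB n q :=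
  setIntegral_nonneg measurableSet_ball fun x _ => rpow_nonneg (norm_nonneg _) _

lemma aux_ball_trans {n : ℕ} (hn : 0 < n) {q : ℝ} (hq : -(n:ℝ) < q) (hq0 : q < 0) (c : Euc n) :
    IntegrableOn (fun ω : Euc n => ‖ω - c‖ ^ q) (ball c 1) ∧
    ∫ ω in ball c 1, ‖ω - c‖ ^ q = CB n q := by
  set F : Euc n → ℝ := (ball (0:Euc n) 1).indicator (fun u => ‖u‖ ^ q) with hF
  have hFint : Integrable F :=
    (integrable_indicator_iff measurableSet_ball).mpr (aux_ball_int hn hq hq0)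
  have hkey : ∀ ω : Euc n, (ball c 1).indicator (fun ω => ‖ω - c‖ ^ q) ω = F (ω - c) := by
    intro ω
    by_cases h : ω ∈ ball c 1
    · have h' : ω - c ∈ ball (0:Euc n) 1 := by
        rwa [mem_ball, dist_eq_norm, sub_zero, ← dist_eq_norm, ← mem_ball]
      rw [indicator_of_mem h, hF, indicator_of_mem h']
    · have h' : ω - c ∉ ball (0:Euc n) 1 := by
        intro hc; apply h
        rw [mem_ball, dist_eq_norm, sub_zero] at hc
        rwa [mem_ball, dist_eq_norm]
      rw [indicator_of_notMem h, hF, indicator_of_notMem h']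
  constructor
  · rw [← integrable_indicator_iff measurableSet_ball]
    have : (ball c 1).indicator (fun ω : Euc n => ‖ω - c‖ ^ q) = fun ω => F (ω - c) :=
      funext hkey
    rw [this]
    exact hFint.comp_sub_right c
  · rw [← integral_indicator measurableSet_ball]
    calc ∫ ω, (ball c 1).indicator (fun ω : Euc n => ‖ω - c‖ ^ q) ω
        = ∫ ω, F (ω - c) := by exact integral_congr_ae (Filter.Eventually.of_forall hkey)
      _ = ∫ u, F u := integral_sub_right_eq_self F c
      _ = CB n q := by rw [hF, integral_indicator measurableSet_ball]; rfl

noncomputable def CJap (n : ℕ) (q : ℝ) : ℝ := ∫ x : Euc n, (1 + ‖x‖) ^ (-q)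

lemma aux_compl_int {n : ℕ} (hn : 0 < n) {q : ℝ} (hq : (n:ℝ) < q) (c : Euc n) :
    IntegrableOn (fun ω : Euc n => ‖ω - c‖ ^ (-q)) (ball c 1)ᶜ ∧
    ∫ ω in (ball c 1)ᶜ, ‖ω - c‖ ^ (-q) ≤ 2 ^ q * CJap n q := by
  haveI : Nonempty (Fin n) := ⟨⟨0, hn⟩⟩
  have hq0 : 0 < q := lt_of_le_of_lt (Nat.cast_nonneg n) hq
  have hjap : Integrable (fun x : Euc n => (1 + ‖x‖) ^ (-q)) := by
    have := integrable_one_add_norm (E := Euc n) (μ := volume) (r := q)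
      (by rwa [finrank_euclideanSpace_fin])
    exact this
  have hmaj : Integrable (fun ω : Euc n => 2 ^ q * (1 + ‖ω - c‖) ^ (-q)) :=
    ((hjap.comp_sub_right c).const_mul _)
  have hptwise : ∀ ω : Euc n, ω ∈ (ball c 1)ᶜ →
      ‖ω - c‖ ^ (-q) ≤ 2 ^ q * (1 + ‖ω - c‖) ^ (-q) := by
    intro ω hω
    have h1 : (1:ℝ) ≤ ‖ω - c‖ := by
      simp only [mem_compl_iff, mem_ball, not_lt, dist_eq_norm] at hω
      exact hω
    have h2 : (1 + ‖ω - c‖) ≤ 2 * ‖ω - c‖ := by linarith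
    have h3 : (1 + ‖ω - c‖) ^ (-q) ≥ (2 * ‖ω - c‖) ^ (-q) :=
      Real.rpow_le_rpow_of_nonpos (by linarith) h2 (by linarith)
    have h4 : (2 * ‖ω - c‖) ^ (-q) = 2 ^ (-q) * ‖ω - c‖ ^ (-q) :=
      Real.mul_rpow (by norm_num) (by linarith)
    rw [h4] at h3
    have h5 : 2 ^ q * (2 ^ (-q) * ‖ω - c‖ ^ (-q)) = ‖ω - c‖ ^ (-q) := by
      rw [← mul_assoc, ← Real.rpow_add two_pos]
      simp
    calc ‖ω - c‖ ^ (-q) = 2 ^ q * (2 ^ (-q) * ‖ω - c‖ ^ (-q)) := h5.symm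
      _ ≤ 2 ^ q * (1 + ‖ω - c‖) ^ (-q) := by
          apply mul_le_mul_of_nonneg_left h3 (by positivity)
  have hmeas : Measurable (fun ω : Euc n => ‖ω - c‖ ^ (-q)) := by fun_prop
  have hint : IntegrableOn (fun ω : Euc n => ‖ω - c‖ ^ (-q)) (ball c 1)ᶜ := by
    refine (hmaj.integrableOn).mono' hmeas.aestronglyMeasurable.restrict ?_
    rw [ae_restrict_iff' measurableSet_ball.compl]
    filter_upwards with ω hω
    rw [Real.norm_of_nonneg (rpow_nonneg (norm_nonneg _) _)]
    exact hptwise ω hω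
  refine ⟨hint, ?_⟩
  calc ∫ ω in (ball c 1)ᶜ, ‖ω - c‖ ^ (-q)
      ≤ ∫ ω in (ball c 1)ᶜ, 2 ^ q * (1 + ‖ω - c‖) ^ (-q) := by
        refine setIntegral_mono_on hint hmaj.integrableOn measurableSet_ball.compl hptwise
    _ ≤ ∫ ω, 2 ^ q * (1 + ‖ω - c‖) ^ (-q) :=
        setIntegral_le_integral hmaj (Filter.Eventually.of_forall fun ω => by positivity)
    _ = 2 ^ q * ∫ ω, (1 + ‖ω - c‖) ^ (-q) := integral_const_mul _ _
    _ = 2 ^ q * CJap n q := by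
        rw [integral_sub_right_eq_self (fun u : Euc n => (1 + ‖u‖) ^ (-q)) c]; rfl

lemma aux_jb_int {n : ℕ} (hn : 0 < n) {q : ℝ} (hq : (n:ℝ) < q) :
    Integrable (fun x : Euc n => jb ‖x‖ ^ (-q)) := by
  have h := integrable_rpow_neg_one_add_norm_sq (E := Euc n) (μ := volume) (r := q)
    (by rwa [finrank_euclideanSpace_fin])
  have : (fun x : Euc n => jb ‖x‖ ^ (-q)) = fun x : Euc n => ((1:ℝ) + ‖x‖ ^ 2) ^ (-q / 2) := by
    funext x
    rw [jb, Real.sqrt_eq_rpow, ← Real.rpow_natCast ‖x‖ 2, ← Real.rpow_mul (by positivity)]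
    rw [show ((1:ℝ)/2) * (-q) = -q/2 by ring]
  rw [this]; exact h

lemma aux_sep {x w p q : ℝ} (hx : 0 ≤ x) (hw : 0 ≤ w) (hp : 0 ≤ p) (hq : 0 ≤ q) :
    x ^ (-p) * w ^ (-q) ≤ x ^ (-(p+q)) + w ^ (-(p+q)) := by
  rcases le_total x w with h | h
  · rcases eq_or_lt_of_le hx with rfl | hx0
    · rcases eq_or_lt_of_le hp with rfl | hp0
      · simp only [neg_zero, Real.rpow_zero, one_mul, zero_add]
        rcases eq_or_lt_of_le hq with rfl | hq0
        · simp only [neg_zero, Real.rpow_zero]; linarith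
        · have h1 : (0:ℝ) ^ (-q) = 0 := Real.zero_rpow (by linarith)
          rw [h1, zero_add]
      · have h1 : (0:ℝ) ^ (-p) = 0 := Real.zero_rpow (by linarith)
        rw [h1, zero_mul]
        positivity
    · have h1 : w ^ (-q) ≤ x ^ (-q) := Real.rpow_le_rpow_of_nonpos hx0 h (by linarith)
      calc x ^ (-p) * w ^ (-q) ≤ x ^ (-p) * x ^ (-q) :=
            mul_le_mul_of_nonneg_left h1 (rpow_nonneg hx _)
        _ = x ^ (-(p+q)) := by rw [← Real.rpow_add hx0]; ring_nf
        _ ≤ _ := le_add_of_nonneg_right (rpow_nonneg hw _)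
  · rcases eq_or_lt_of_le hw with rfl | hw0
    · rcases eq_or_lt_of_le hq with rfl | hq0
      · simp only [neg_zero, Real.rpow_zero, mul_one]
        have : (0:ℝ) ^ (-(p+0)) = (0:ℝ) ^ (-p) := by ring_nf
        rw [add_zero]
        exact le_add_of_nonneg_right (rpow_nonneg (le_refl 0) _)
      · have h1 : (0:ℝ) ^ (-q) = 0 := Real.zero_rpow (by linarith)
        rw [h1, mul_zero]
        positivity
    · have h1 : x ^ (-p) ≤ w ^ (-p) := Real.rpow_le_rpow_of_nonpos hw0 h (by linarith)
      calc x ^ (-p) * w ^ (-q) ≤ w ^ (-p) * w ^ (-q) :=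
            mul_le_mul_of_nonneg_right h1 (rpow_nonneg hw _)
        _ = w ^ (-(p+q)) := by rw [← Real.rpow_add hw0]; ring_nf
        _ ≤ _ := le_add_of_nonneg_left (rpow_nonneg hx _)

lemma jb_one_le (t : ℝ) : 1 ≤ jb t := by
  rw [jb]
  have : (1:ℝ) = Real.sqrt 1 := (Real.sqrt_one).symm
  rw [this]
  exact Real.sqrt_le_sqrt (by nlinarith)

lemma jb_rpow_le_one {t b : ℝ} (hb : 0 ≤ b) : jb t ^ (-b) ≤ 1 :=
  Real.rpow_le_one_of_one_le_of_nonpos (jb_one_le t) (by linarith)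

lemma jb_rpow_nonneg (t b : ℝ) : 0 ≤ jb t ^ (-b) :=
  rpow_nonneg (le_trans zero_le_one (jb_one_le t)) _

lemma lemG {n : ℕ} (hn : 0 < n) {t b : ℝ} (ht0 : 0 < t) (htn : t < n) (htb : t < b) :
    ∃ K : ℝ, 0 ≤ K ∧ ∀ c : Euc n,
      Integrable (fun ω : Euc n => ‖ω - c‖ ^ (t - (n:ℝ)) * jb ‖ω‖ ^ (-b)) ∧
      (∫ ω : Euc n, ‖ω - c‖ ^ (t - (n:ℝ)) * jb ‖ω‖ ^ (-b)) ≤ K := by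
  haveI : Nonempty (Fin n) := ⟨⟨0, hn⟩⟩
  have hb0 : 0 < b := lt_trans ht0 htb
  set q₂ : ℝ := (n:ℝ) - t + b with hq₂
  have hq₂n : (n:ℝ) < q₂ := by rw [hq₂]; linarith
  have hjb2 : Integrable (fun x : Euc n => jb ‖x‖ ^ (-q₂)) := aux_jb_int hn hq₂n
  refine ⟨CB n (t - n) + (2 ^ q₂ * CJap n q₂ + ∫ x : Euc n, jb ‖x‖ ^ (-q₂)), ?_, ?_⟩
  · have h1 := CB_nonneg n (t - n)
    have h2 : 0 ≤ CJap n q₂ := integral_nonneg fun x => rpow_nonneg (by positivity) _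
    have h3 : 0 ≤ ∫ x : Euc n, jb ‖x‖ ^ (-q₂) := integral_nonneg fun x => jb_rpow_nonneg _ _
    positivity
  intro c
  set g : Euc n → ℝ := fun ω => ‖ω - c‖ ^ (t - (n:ℝ)) * jb ‖ω‖ ^ (-b) with hg
  have hgmeas : Measurable g := by unfold g; unfold jb; fun_prop
  have hexp1 : -(n:ℝ) < t - n := by linarith
  have hexp2 : t - (n:ℝ) < 0 := by linarith
  have hballI := (aux_ball_trans hn hexp1 hexp2 c).1
  have hballV := (aux_ball_trans hn hexp1 hexp2 c).2
  have hcomplI := (aux_compl_int hn hq₂n c).1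
  have hcomplV := (aux_compl_int hn hq₂n c).2
  -- pointwise bound on the ball
  have hptB : ∀ ω : Euc n, ω ∈ ball c 1 → g ω ≤ ‖ω - c‖ ^ (t - (n:ℝ)) := by
    intro ω _
    calc g ω ≤ ‖ω - c‖ ^ (t - (n:ℝ)) * 1 :=
          mul_le_mul_of_nonneg_left (jb_rpow_le_one hb0.le) (rpow_nonneg (norm_nonneg _) _)
      _ = ‖ω - c‖ ^ (t - (n:ℝ)) := mul_one _
  -- global separation bound
  set maj : Euc n → ℝ := fun ω => ‖ω - c‖ ^ (-q₂) + jb ‖ω‖ ^ (-q₂) with hmaj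
  have hptS : ∀ ω : Euc n, g ω ≤ maj ω := by
    intro ω
    have h1 : t - (n:ℝ) = -((n:ℝ) - t) := by ring
    have h2 : -q₂ = -(((n:ℝ) - t) + b) := by rw [hq₂]
    have h3 := aux_sep (norm_nonneg (ω - c)) (le_trans zero_le_one (jb_one_le ‖ω‖))
      (by linarith : (0:ℝ) ≤ (n:ℝ) - t) hb0.le
    rw [hmaj]
    show g ω ≤ ‖ω - c‖ ^ (-q₂) + jb ‖ω‖ ^ (-q₂)
    rw [hg, h1, h2]
    exact h3
  have hmajI : IntegrableOn maj (ball c 1)ᶜ := hcomplI.add hjb2.integrableOn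
  have hgBc : IntegrableOn g (ball c 1)ᶜ := by
    refine hmajI.mono' hgmeas.aestronglyMeasurable.restrict ?_
    filter_upwards with ω
    rw [Real.norm_of_nonneg (mul_nonneg (rpow_nonneg (norm_nonneg _) _) (jb_rpow_nonneg _ _))]
    exact hptS ω
  have hgB : IntegrableOn g (ball c 1) := by
    refine hballI.mono' hgmeas.aestronglyMeasurable.restrict ?_
    rw [ae_restrict_iff' measurableSet_ball]
    filter_upwards with ω hω
    rw [Real.norm_of_nonneg (mul_nonneg (rpow_nonneg (norm_nonneg _) _) (jb_rpow_nonneg _ _))]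
    exact hptB ω hω
  have hgInt : Integrable g := by
    have := hgB.union hgBc
    rwa [union_compl_self, integrableOn_univ] at this
  refine ⟨hgInt, ?_⟩
  have hsplit : (∫ ω, g ω) = (∫ ω in ball c 1, g ω) + ∫ ω in (ball c 1)ᶜ, g ω :=
    (integral_add_compl measurableSet_ball hgInt).symm
  rw [hsplit]
  have hB : (∫ ω in ball c 1, g ω) ≤ CB n (t - n) := by
    calc (∫ ω in ball c 1, g ω) ≤ ∫ ω in ball c 1, ‖ω - c‖ ^ (t - (n:ℝ)) :=
          setIntegral_mono_on hgB hballI measurableSet_ball hptB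
      _ = CB n (t - n) := hballV
  have hBc : (∫ ω in (ball c 1)ᶜ, g ω) ≤ 2 ^ q₂ * CJap n q₂ + ∫ x : Euc n, jb ‖x‖ ^ (-q₂) := by
    calc (∫ ω in (ball c 1)ᶜ, g ω) ≤ ∫ ω in (ball c 1)ᶜ, maj ω :=
          setIntegral_mono_on hgBc hmajI measurableSet_ball.compl (fun ω _ => hptS ω)
      _ = (∫ ω in (ball c 1)ᶜ, ‖ω - c‖ ^ (-q₂)) + ∫ ω in (ball c 1)ᶜ, jb ‖ω‖ ^ (-q₂) :=
          integral_add hcomplI hjb2.integrableOn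
      _ ≤ 2 ^ q₂ * CJap n q₂ + ∫ x : Euc n, jb ‖x‖ ^ (-q₂) := by
          exact add_le_add hcomplV (setIntegral_le_integral hjb2
              (Filter.Eventually.of_forall fun ω => jb_rpow_nonneg _ _))
  linarith

lemma lemU {n : ℕ} (hn : 0 < n) {a b α₀ : ℝ} (ha0 : 0 < a) (han : a < n) (hab : a < b)
    (h00 : 0 ≤ α₀) (hα : α₀ ≤ a/2) (z : Euc n) :
    ∃ U : ℝ, 0 ≤ U ∧ ∀ y : Euc n,
      Integrable (fun ω : Euc n => ‖ω - y‖ ^ (a - (n:ℝ)) * jb ‖ω‖ ^ (-b) * ‖ω - z‖ ^ (-α₀)) ∧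
      (∫ ω : Euc n, ‖ω - y‖ ^ (a - (n:ℝ)) * jb ‖ω‖ ^ (-b) * ‖ω - z‖ ^ (-α₀)) ≤ U := by
  set t : ℝ := a - α₀ with htdef
  have ht0 : 0 < t := by rw [htdef]; linarith
  have htn : t < n := by rw [htdef]; linarith
  have htb : t < b := by rw [htdef]; linarith
  obtain ⟨K, hK0, hK⟩ := lemG hn ht0 htn htb
  refine ⟨2 * K, by linarith, ?_⟩
  intro y
  set h : Euc n → ℝ := fun ω => ‖ω - y‖ ^ (a - (n:ℝ)) * jb ‖ω‖ ^ (-b) * ‖ω - z‖ ^ (-α₀)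
    with hh
  set maj : Euc n → ℝ := fun ω =>
    ‖ω - y‖ ^ (t - (n:ℝ)) * jb ‖ω‖ ^ (-b) + ‖ω - z‖ ^ (t - (n:ℝ)) * jb ‖ω‖ ^ (-b) with hmaj
  have hmajI : Integrable maj := (hK y).1.add (hK z).1
  have hpt : ∀ ω : Euc n, h ω ≤ maj ω := by
    intro ω
    have h1 : a - (n:ℝ) = -(((n:ℝ) - a)) := by ring
    have h2 : t - (n:ℝ) = -(((n:ℝ) - a) + α₀) := by rw [htdef]; ring
    have hsep := aux_sep (norm_nonneg (ω - y)) (norm_nonneg (ω - z))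
      (by linarith : (0:ℝ) ≤ (n:ℝ) - a) h00
    have hjb := jb_rpow_nonneg ‖ω‖ b
    calc h ω = (‖ω - y‖ ^ (-((n:ℝ) - a)) * ‖ω - z‖ ^ (-α₀)) * jb ‖ω‖ ^ (-b) := by
          rw [hh]; rw [h1]; ring
      _ ≤ (‖ω - y‖ ^ (-(((n:ℝ) - a) + α₀)) + ‖ω - z‖ ^ (-(((n:ℝ) - a) + α₀))) *
            jb ‖ω‖ ^ (-b) := mul_le_mul_of_nonneg_right hsep hjb
      _ = maj ω := by rw [hmaj]; rw [h2]; ring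
  have hnn : ∀ ω : Euc n, 0 ≤ h ω := fun ω =>
    mul_nonneg (mul_nonneg (rpow_nonneg (norm_nonneg _) _) (jb_rpow_nonneg _ _))
      (rpow_nonneg (norm_nonneg _) _)
  have hmeas : Measurable h := by unfold h; unfold jb; fun_prop
  have hI : Integrable h := by
    refine hmajI.mono' hmeas.aestronglyMeasurable ?_
    filter_upwards with ω
    rw [Real.norm_of_nonneg (hnn ω)]
    exact hpt ω
  refine ⟨hI, ?_⟩
  calc (∫ ω, h ω) ≤ ∫ ω, maj ω := integral_mono hI hmajI hpt
    _ = (∫ ω, ‖ω - y‖ ^ (t - (n:ℝ)) * jb ‖ω‖ ^ (-b)) +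
        ∫ ω, ‖ω - z‖ ^ (t - (n:ℝ)) * jb ‖ω‖ ^ (-b) := integral_add (hK y).1 (hK z).1
    _ ≤ K + K := add_le_add (hK y).2 (hK z).2
    _ = 2 * K := by ring

lemma lemSC {n : ℕ} (hn : 0 < n) {a b α : ℝ} (ha0 : 0 < a) (han : a < n) (hab : a < b)
    (hα1 : a/2 ≤ α) (hαn : α < n) (z : Euc n) :
    ∃ K : ℝ, 0 ≤ K ∧ ∀ y : Euc n, y ≠ z →
      Integrable (fun ω : Euc n => ‖ω - y‖ ^ (a - (n:ℝ)) * jb ‖ω‖ ^ (-b) * ‖ω - z‖ ^ (-α)) ∧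
      (∫ ω : Euc n, ‖ω - y‖ ^ (a - (n:ℝ)) * jb ‖ω‖ ^ (-b) * ‖ω - z‖ ^ (-α)) ≤
        K * (1 + ‖y - z‖ ^ (-(α - a/2))) := by
  have hα0 : 0 < α := lt_of_lt_of_le (by linarith) hα1
  set m : ℝ := α - a/2 with hm
  have hm0 : 0 ≤ m := by rw [hm]; linarith
  obtain ⟨U, hU0, hU⟩ := lemU hn ha0 han hab (by linarith : (0:ℝ) ≤ a/2) le_rfl z
  set CBs : ℝ := CB n (-α) + CB n (a/2 - n) with hCBs
  have hCBs0 : 0 ≤ CBs := add_nonneg (CB_nonneg _ _) (CB_nonneg _ _)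
  have hballα := aux_ball_trans hn (by linarith : -(n:ℝ) < -α) (by linarith : -α < 0) z
  have hballh := aux_ball_trans hn (by linarith : -(n:ℝ) < a/2 - n)
    (by linarith : a/2 - (n:ℝ) < 0) z
  refine ⟨2 ^ m * (U + CBs), by positivity, ?_⟩
  intro y hy
  set r : ℝ := ‖y - z‖ with hr
  have hr0 : 0 < r := by rw [hr]; exact norm_pos_iff.mpr (sub_ne_zero.mpr hy)
  set ρ : ℝ := min r 2 / 2 with hρ
  have hρ0 : 0 < ρ := by rw [hρ]; positivity
  have hρ1 : ρ ≤ 1 := by rw [hρ]; have := min_le_right r 2; linarith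
  have h2ρ : 2 * ρ ≤ r := by rw [hρ]; have := min_le_left r 2; linarith
  set h : Euc n → ℝ := fun ω => ‖ω - y‖ ^ (a - (n:ℝ)) * jb ‖ω‖ ^ (-b) * ‖ω - z‖ ^ (-α)
    with hh
  set hU' : Euc n → ℝ := fun ω => ‖ω - y‖ ^ (a - (n:ℝ)) * jb ‖ω‖ ^ (-b) * ‖ω - z‖ ^ (-(a/2))
    with hhU
  have hnn : ∀ ω : Euc n, 0 ≤ h ω := fun ω =>
    mul_nonneg (mul_nonneg (rpow_nonneg (norm_nonneg _) _) (jb_rpow_nonneg _ _))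
      (rpow_nonneg (norm_nonneg _) _)
  have hmeas : Measurable h := by unfold h; unfold jb; fun_prop
  set A : Set (Euc n) := {ω : Euc n | ρ ≤ ‖ω - z‖} with hA
  have hAmeas : MeasurableSet A := measurableSet_le measurable_const (by fun_prop)
  -- bound on A
  have ptA : ∀ ω ∈ A, h ω ≤ ρ ^ (-m) * hU' ω := by
    intro ω hω
    have hωz : ρ ≤ ‖ω - z‖ := hω
    have hωz0 : 0 < ‖ω - z‖ := lt_of_lt_of_le hρ0 hωz
    have hsplit : ‖ω - z‖ ^ (-α) = ‖ω - z‖ ^ (-m) * ‖ω - z‖ ^ (-(a/2)) := by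
      rw [← Real.rpow_add hωz0]; congr 1; rw [hm]; ring
    have hle : ‖ω - z‖ ^ (-m) ≤ ρ ^ (-m) :=
      Real.rpow_le_rpow_of_nonpos hρ0 hωz (by linarith)
    calc h ω = ‖ω - y‖ ^ (a - (n:ℝ)) * jb ‖ω‖ ^ (-b) *
          (‖ω - z‖ ^ (-m) * ‖ω - z‖ ^ (-(a/2))) := by simp only [hh]; rw [hsplit]
      _ ≤ ‖ω - y‖ ^ (a - (n:ℝ)) * jb ‖ω‖ ^ (-b) * (ρ ^ (-m) * ‖ω - z‖ ^ (-(a/2))) := by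
          apply mul_le_mul_of_nonneg_left _
            (mul_nonneg (rpow_nonneg (norm_nonneg _) _) (jb_rpow_nonneg _ _))
          exact mul_le_mul_of_nonneg_right hle (rpow_nonneg (norm_nonneg _) _)
      _ = ρ ^ (-m) * hU' ω := by simp only [hhU]; ring
  -- bound on Aᶜ
  have ptB : ∀ ω ∈ Aᶜ, h ω ≤ ρ ^ (-m) * (‖ω - z‖ ^ (-α) + ‖ω - z‖ ^ (a/2 - (n:ℝ))) := by
    intro ω hω
    have hωz : ‖ω - z‖ < ρ := not_le.mp hω
    have hky : ρ ≤ ‖ω - y‖ := by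
      have htri : r ≤ ‖ω - y‖ + ‖ω - z‖ := by
        rw [hr]
        calc ‖y - z‖ = ‖(y - ω) + (ω - z)‖ := by rw [sub_add_sub_cancel]
          _ ≤ ‖y - ω‖ + ‖ω - z‖ := norm_add_le _ _
          _ = ‖ω - y‖ + ‖ω - z‖ := by rw [norm_sub_rev]
      linarith
    have hker : ‖ω - y‖ ^ (a - (n:ℝ)) ≤ ρ ^ (a - (n:ℝ)) :=
      Real.rpow_le_rpow_of_nonpos hρ0 hky (by linarith)
    have hstep1 : h ω ≤ ρ ^ (a - (n:ℝ)) * ‖ω - z‖ ^ (-α) := by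
      simp only [hh]
      calc ‖ω - y‖ ^ (a - (n:ℝ)) * jb ‖ω‖ ^ (-b) * ‖ω - z‖ ^ (-α)
          ≤ ρ ^ (a - (n:ℝ)) * 1 * ‖ω - z‖ ^ (-α) := by
            apply mul_le_mul_of_nonneg_right _ (rpow_nonneg (norm_nonneg _) _)
            exact mul_le_mul hker (jb_rpow_le_one (by linarith)) (jb_rpow_nonneg _ _)
              (rpow_nonneg hρ0.le _)
        _ = ρ ^ (a - (n:ℝ)) * ‖ω - z‖ ^ (-α) := by ring
    have hfact : ρ ^ (a - (n:ℝ)) = ρ ^ (-m) * ρ ^ (α + a/2 - n) := by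
      rw [← Real.rpow_add hρ0]; congr 1; rw [hm]; ring
    by_cases hc : (n:ℝ) ≤ α + a/2
    · have : ρ ^ (α + a/2 - n) ≤ 1 := Real.rpow_le_one hρ0.le hρ1 (by linarith)
      have h2 : ρ ^ (a - (n:ℝ)) ≤ ρ ^ (-m) := by
        rw [hfact]
        calc ρ ^ (-m) * ρ ^ (α + a/2 - n) ≤ ρ ^ (-m) * 1 :=
              mul_le_mul_of_nonneg_left this (rpow_nonneg hρ0.le _)
          _ = ρ ^ (-m) := mul_one _
      calc h ω ≤ ρ ^ (a - (n:ℝ)) * ‖ω - z‖ ^ (-α) := hstep1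
        _ ≤ ρ ^ (-m) * ‖ω - z‖ ^ (-α) :=
            mul_le_mul_of_nonneg_right h2 (rpow_nonneg (norm_nonneg _) _)
        _ ≤ ρ ^ (-m) * (‖ω - z‖ ^ (-α) + ‖ω - z‖ ^ (a/2 - (n:ℝ))) := by
            apply mul_le_mul_of_nonneg_left _ (rpow_nonneg hρ0.le _)
            exact le_add_of_nonneg_right (rpow_nonneg (norm_nonneg _) _)
    · push_neg at hc
      rcases eq_or_ne ω z with rfl | hωz0
      · have : h ω = 0 := by
          rw [hh]
          simp only [sub_self, norm_zero]
          rw [Real.zero_rpow (by linarith : -α ≠ 0)]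
          ring
        rw [this]
        positivity
      · have hpos : 0 < ‖ω - z‖ := norm_pos_iff.mpr (sub_ne_zero.mpr hωz0)
        have hρω : ρ ^ (α + a/2 - n) ≤ ‖ω - z‖ ^ (α + a/2 - n) :=
          Real.rpow_le_rpow_of_nonpos hpos hωz.le (by linarith)
        calc h ω ≤ ρ ^ (a - (n:ℝ)) * ‖ω - z‖ ^ (-α) := hstep1
          _ = ρ ^ (-m) * (ρ ^ (α + a/2 - n) * ‖ω - z‖ ^ (-α)) := by rw [hfact]; ring
          _ ≤ ρ ^ (-m) * (‖ω - z‖ ^ (α + a/2 - n) * ‖ω - z‖ ^ (-α)) := by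
              apply mul_le_mul_of_nonneg_left _ (rpow_nonneg hρ0.le _)
              exact mul_le_mul_of_nonneg_right hρω (rpow_nonneg (norm_nonneg _) _)
          _ = ρ ^ (-m) * ‖ω - z‖ ^ (a/2 - (n:ℝ)) := by
              rw [← Real.rpow_add hpos]
              congr 2
              ring
          _ ≤ ρ ^ (-m) * (‖ω - z‖ ^ (-α) + ‖ω - z‖ ^ (a/2 - (n:ℝ))) := by
              apply mul_le_mul_of_nonneg_left _ (rpow_nonneg hρ0.le _)
              exact le_add_of_nonneg_left (rpow_nonneg (norm_nonneg _) _)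
  -- integrability
  have hmajA : Integrable (fun ω => ρ ^ (-m) * hU' ω) := (hU y).1.const_mul _
  have hIA : IntegrableOn h A := by
    refine hmajA.integrableOn.mono' hmeas.aestronglyMeasurable.restrict ?_
    rw [ae_restrict_iff' hAmeas]
    filter_upwards with ω hω
    rw [Real.norm_of_nonneg (hnn ω)]
    exact ptA ω hω
  have hmajBI : IntegrableOn
      (fun ω => ρ ^ (-m) * (‖ω - z‖ ^ (-α) + ‖ω - z‖ ^ (a/2 - (n:ℝ)))) (ball z 1) :=
    (hballα.1.add hballh.1).const_mul _
  have hsubB : Aᶜ ⊆ ball z 1 := by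
    intro ω hω
    have : ‖ω - z‖ < ρ := not_le.mp hω
    rw [mem_ball, dist_eq_norm]
    linarith
  have hIAc : IntegrableOn h Aᶜ := by
    refine (hmajBI.mono_set hsubB).mono' hmeas.aestronglyMeasurable.restrict ?_
    rw [ae_restrict_iff' hAmeas.compl]
    filter_upwards with ω hω
    rw [Real.norm_of_nonneg (hnn ω)]
    exact ptB ω hω
  have hInt : Integrable h := by
    have := hIA.union hIAc
    rwa [union_compl_self, integrableOn_univ] at this
  refine ⟨hInt, ?_⟩
  -- integral bound
  have hρm : ρ ^ (-m) ≤ 2 ^ m * (1 + r ^ (-m)) := by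
    have hrm0 : 0 ≤ r ^ (-m) := rpow_nonneg hr0.le _
    have h2m1 : (1:ℝ) ≤ 2 ^ m := Real.one_le_rpow one_le_two hm0
    rcases le_total r 2 with hc | hc
    · have : ρ = r / 2 := by rw [hρ, min_eq_left hc]
      rw [this, Real.div_rpow hr0.le (by norm_num)]
      rw [Real.rpow_neg (by norm_num : (0:ℝ) ≤ 2), div_inv_eq_mul]
      nlinarith
    · have : ρ = 1 := by rw [hρ, min_eq_right hc]; norm_num
      rw [this, Real.one_rpow]
      nlinarith
  have hsplitInt : (∫ ω, h ω) = (∫ ω in A, h ω) + ∫ ω in Aᶜ, h ω :=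
    (integral_add_compl hAmeas hInt).symm
  have hIntA : (∫ ω in A, h ω) ≤ ρ ^ (-m) * U := by
    calc (∫ ω in A, h ω) ≤ ∫ ω in A, ρ ^ (-m) * hU' ω :=
          setIntegral_mono_on hIA hmajA.integrableOn hAmeas ptA
      _ ≤ ∫ ω, ρ ^ (-m) * hU' ω := setIntegral_le_integral hmajA
          (Filter.Eventually.of_forall fun ω => by
            have : 0 ≤ hU' ω := mul_nonneg (mul_nonneg (rpow_nonneg (norm_nonneg _) _)
              (jb_rpow_nonneg _ _)) (rpow_nonneg (norm_nonneg _) _)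
            positivity)
      _ = ρ ^ (-m) * ∫ ω, hU' ω := integral_const_mul _ _
      _ ≤ ρ ^ (-m) * U := mul_le_mul_of_nonneg_left (hU y).2 (rpow_nonneg hρ0.le _)
  have hIntAc : (∫ ω in Aᶜ, h ω) ≤ ρ ^ (-m) * CBs := by
    calc (∫ ω in Aᶜ, h ω)
        ≤ ∫ ω in Aᶜ, ρ ^ (-m) * (‖ω - z‖ ^ (-α) + ‖ω - z‖ ^ (a/2 - (n:ℝ))) :=
          setIntegral_mono_on hIAc (hmajBI.mono_set hsubB) hAmeas.compl ptB
      _ ≤ ∫ ω in ball z 1, ρ ^ (-m) * (‖ω - z‖ ^ (-α) + ‖ω - z‖ ^ (a/2 - (n:ℝ))) := by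
          apply setIntegral_mono_set hmajBI
          · filter_upwards with ω
            have h1 : 0 ≤ ‖ω - z‖ ^ (-α) := rpow_nonneg (norm_nonneg _) _
            have h2 : 0 ≤ ‖ω - z‖ ^ (a/2 - (n:ℝ)) := rpow_nonneg (norm_nonneg _) _
            positivity
          · exact HasSubset.Subset.eventuallyLE hsubB
      _ = ρ ^ (-m) * ∫ ω in ball z 1, (‖ω - z‖ ^ (-α) + ‖ω - z‖ ^ (a/2 - (n:ℝ))) :=
          integral_const_mul _ _
      _ = ρ ^ (-m) * CBs := by
          rw [integral_add hballα.1 hballh.1, hballα.2, hballh.2, hCBs]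
  calc (∫ ω, h ω) ≤ ρ ^ (-m) * U + ρ ^ (-m) * CBs := by rw [hsplitInt]; linarith
    _ = ρ ^ (-m) * (U + CBs) := by ring
    _ ≤ (2 ^ m * (1 + r ^ (-m))) * (U + CBs) :=
        mul_le_mul_of_nonneg_right hρm (by linarith)
    _ = 2 ^ m * (U + CBs) * (1 + ‖y - z‖ ^ (-(α - a/2))) := by rw [← hr, ← hm]; ring

end AuxRemovability

/-- Lemma A.2: removability of singularities for the nonlocal
integral equation. -/
theorem stmt19 (n N : ℕ) (s α β : ℝ) (hs : 0 < s) (hsn : 2*s < (n:ℝ))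
    (hα : 0 < α) (hαn : α < (n:ℝ)) (hβ : 2*s < β)
    (Y : Fin N → Euc n) (hY : Function.Injective Y)
    (f V : Euc n → ℝ) (C : ℝ) (hC : 0 < C)
    (heq : ∀ y : Euc n, y ∉ Set.range Y →
      f y = ∫ ω : Euc n, rieszK n s (y - ω) * (V ω * f ω))
    (hf : ∀ y : Euc n, y ∉ Set.range Y →
      |f y| ≤ C * (1 + ∑ i, ‖y - Y i‖ ^ (-α)))
    (hV : ∀ y : Euc n, y ∉ Set.range Y → |V y| ≤ C * jb ‖y‖ ^ (-β)) :
    ∃ M : ℝ, ∀ y : Euc n, y ∉ Set.range Y → |f y| ≤ M := by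
  have hs2n : 0 < (n:ℝ) := lt_trans (by linarith) hsn
  have hn : 0 < n := by exact_mod_cast hs2n
  haveI : Nonempty (Fin n) := ⟨⟨0, hn⟩⟩
  haveI : Nontrivial (Euc n) := inferInstance
  set γ : ℝ := Real.Gamma (((n:ℝ) - 2*s)/2) / (Real.pi ^ ((n:ℝ)/2) * 2 ^ (2*s) * Real.Gamma s)
    with hγ
  have hγ0 : 0 ≤ γ := by
    rw [hγ]
    apply div_nonneg
    · exact (Real.Gamma_pos_of_pos (by linarith)).le
    · have h1 : (0:ℝ) < Real.pi ^ ((n:ℝ)/2) := Real.rpow_pos_of_pos Real.pi_pos _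
      have h2 : (0:ℝ) < (2:ℝ) ^ (2*s) := Real.rpow_pos_of_pos two_pos _
      have h3 : (0:ℝ) < Real.Gamma s := Real.Gamma_pos_of_pos hs
      positivity
  have hnull : volume (Set.range Y) = 0 := (Set.finite_range Y).measure_zero _
  have hae : ∀ᵐ ω : Euc n, ω ∉ Set.range Y := by
    rw [MeasureTheory.ae_iff]
    convert hnull using 2
    ext ω; simp
  obtain ⟨K₀, hK₀0, hK₀⟩ := lemG hn (t := 2*s) (b := β) (by linarith) hsn hβ
  -- master estimate
  have master : ∀ (at' C' : ℝ), 0 ≤ C' → 0 < at' →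
      (∀ y : Euc n, y ∉ Set.range Y → |f y| ≤ C' * (1 + ∑ i, ‖y - Y i‖ ^ (-at'))) →
      ∀ y : Euc n, y ∉ Set.range Y →
      (∀ i : Fin N, Integrable (fun ω : Euc n =>
        ‖ω - y‖ ^ (2*s - (n:ℝ)) * jb ‖ω‖ ^ (-β) * ‖ω - Y i‖ ^ (-at'))) →
      |f y| ≤ γ * C * C' * ((∫ ω : Euc n, ‖ω - y‖ ^ (2*s - (n:ℝ)) * jb ‖ω‖ ^ (-β)) +
        ∑ i, ∫ ω : Euc n, ‖ω - y‖ ^ (2*s - (n:ℝ)) * jb ‖ω‖ ^ (-β) * ‖ω - Y i‖ ^ (-at')) := by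
    intro at' C' hC'0 hat0 hfb y hy hint
    set h₀ : Euc n → ℝ := fun ω => ‖ω - y‖ ^ (2*s - (n:ℝ)) * jb ‖ω‖ ^ (-β) with hh₀
    set hi : Fin N → Euc n → ℝ := fun i ω =>
      ‖ω - y‖ ^ (2*s - (n:ℝ)) * jb ‖ω‖ ^ (-β) * ‖ω - Y i‖ ^ (-at') with hhi
    set H : Euc n → ℝ := fun ω => γ * C * C' * (h₀ ω + ∑ i, hi i ω) with hH
    have hHint : Integrable H := by
      apply Integrable.const_mul
      exact (hK₀ y).1.add (integrable_finset_sum _ fun i _ => hint i)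
    have hbound : ∀ ω : Euc n, ω ∉ Set.range Y →
        ‖rieszK n s (y - ω) * (V ω * f ω)‖ ≤ H ω := by
      intro ω hω
      have h1 : |rieszK n s (y - ω)| = γ * ‖ω - y‖ ^ (2*s - (n:ℝ)) := by
        rw [rieszK, ← hγ, abs_of_nonneg (mul_nonneg hγ0 (rpow_nonneg (norm_nonneg _) _)),
          norm_sub_rev]
      have hwnn : 0 ≤ C * jb ‖ω‖ ^ (-β) := le_trans (abs_nonneg _) (hV ω hω)
      have h2 : |V ω * f ω| ≤ (C * jb ‖ω‖ ^ (-β)) * (C' * (1 + ∑ i, ‖ω - Y i‖ ^ (-at'))) := by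
        rw [abs_mul]
        exact mul_le_mul (hV ω hω) (hfb ω hω) (abs_nonneg _) hwnn
      have hknn : 0 ≤ γ * ‖ω - y‖ ^ (2*s - (n:ℝ)) :=
        mul_nonneg hγ0 (rpow_nonneg (norm_nonneg _) _)
      calc ‖rieszK n s (y - ω) * (V ω * f ω)‖
          = |rieszK n s (y - ω)| * |V ω * f ω| := by
            rw [Real.norm_eq_abs, abs_mul]
        _ ≤ (γ * ‖ω - y‖ ^ (2*s - (n:ℝ))) *
              ((C * jb ‖ω‖ ^ (-β)) * (C' * (1 + ∑ i, ‖ω - Y i‖ ^ (-at')))) := by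
            rw [h1]
            exact mul_le_mul_of_nonneg_left h2 hknn
        _ = H ω := by
          rw [hH]
          show _ = γ * C * C' * (h₀ ω + ∑ i, hi i ω)
          rw [hh₀, hhi]
          have : (∑ i, ‖ω - y‖ ^ (2*s - (n:ℝ)) * jb ‖ω‖ ^ (-β) * ‖ω - Y i‖ ^ (-at'))
              = (‖ω - y‖ ^ (2*s - (n:ℝ)) * jb ‖ω‖ ^ (-β)) * ∑ i, ‖ω - Y i‖ ^ (-at') := by
            rw [Finset.mul_sum]
          show _ = γ * C * C' * (_ + _)
          rw [this]
          ring
    calc |f y| = ‖∫ ω : Euc n, rieszK n s (y - ω) * (V ω * f ω)‖ := by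
          rw [heq y hy, Real.norm_eq_abs]
      _ ≤ ∫ ω : Euc n, ‖rieszK n s (y - ω) * (V ω * f ω)‖ := norm_integral_le_integral_norm _
      _ ≤ ∫ ω : Euc n, H ω := by
          apply integral_mono_of_nonneg (Filter.Eventually.of_forall fun ω => norm_nonneg _)
            hHint
          filter_upwards [hae] with ω hω
          exact hbound ω hω
      _ = γ * C * C' * ((∫ ω : Euc n, h₀ ω) + ∑ i, ∫ ω : Euc n, hi i ω) := by
          rw [hH]
          rw [integral_const_mul]
          congr 1
          rw [integral_add (hK₀ y).1 (integrable_finset_sum _ fun i _ => hint i),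
            integral_finset_sum _ fun i _ => hint i]
  -- bounded when the exponent is small
  have small : ∀ at' C' : ℝ, 0 < at' → at' ≤ s → 0 ≤ C' →
      (∀ y : Euc n, y ∉ Set.range Y → |f y| ≤ C' * (1 + ∑ i, ‖y - Y i‖ ^ (-at'))) →
      ∃ M : ℝ, ∀ y : Euc n, y ∉ Set.range Y → |f y| ≤ M := by
    intro at' C' hat0 hats hC'0 hfb
    have hUi : ∀ i : Fin N, ∃ U : ℝ, 0 ≤ U ∧ ∀ y : Euc n,
        Integrable (fun ω : Euc n =>
          ‖ω - y‖ ^ (2*s - (n:ℝ)) * jb ‖ω‖ ^ (-β) * ‖ω - Y i‖ ^ (-at')) ∧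
        (∫ ω : Euc n, ‖ω - y‖ ^ (2*s - (n:ℝ)) * jb ‖ω‖ ^ (-β) * ‖ω - Y i‖ ^ (-at')) ≤ U :=
      fun i => lemU hn (by linarith) hsn hβ hat0.le (by linarith) (Y i)
    choose U hU0 hU using hUi
    refine ⟨γ * C * C' * (K₀ + ∑ i, U i), ?_⟩
    intro y hy
    calc |f y| ≤ γ * C * C' * ((∫ ω : Euc n, ‖ω - y‖ ^ (2*s - (n:ℝ)) * jb ‖ω‖ ^ (-β)) +
          ∑ i, ∫ ω : Euc n, ‖ω - y‖ ^ (2*s - (n:ℝ)) * jb ‖ω‖ ^ (-β) * ‖ω - Y i‖ ^ (-at')) :=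
          master at' C' hC'0 hat0 hfb y hy (fun i => (hU i y).1)
      _ ≤ γ * C * C' * (K₀ + ∑ i, U i) := by
          apply mul_le_mul_of_nonneg_left _ (by positivity)
          exact add_le_add (hK₀ y).2 (Finset.sum_le_sum fun i _ => (hU i y).2)
  -- bootstrap
  have boot : ∀ k : ℕ, ∀ at' : ℝ, 0 < at' → at' < (n:ℝ) → at' ≤ s * (k+1) →
      (∃ C' : ℝ, 0 ≤ C' ∧ ∀ y : Euc n, y ∉ Set.range Y →
        |f y| ≤ C' * (1 + ∑ i, ‖y - Y i‖ ^ (-at'))) →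
      ∃ M : ℝ, ∀ y : Euc n, y ∉ Set.range Y → |f y| ≤ M := by
    intro k
    induction k with
    | zero =>
      intro at' h1 h2 h3 ⟨C', hC'0, hfb⟩
      exact small at' C' h1 (by push_cast at h3; linarith) hC'0 hfb
    | succ k IH =>
      intro at' h1 h2 h3 ⟨C', hC'0, hfb⟩
      by_cases hsm : at' ≤ s
      · exact small at' C' h1 hsm hC'0 hfb
      · push_neg at hsm
        have hKi : ∀ i : Fin N, ∃ K : ℝ, 0 ≤ K ∧ ∀ y : Euc n, y ≠ Y i →
            Integrable (fun ω : Euc n =>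
              ‖ω - y‖ ^ (2*s - (n:ℝ)) * jb ‖ω‖ ^ (-β) * ‖ω - Y i‖ ^ (-at')) ∧
            (∫ ω : Euc n, ‖ω - y‖ ^ (2*s - (n:ℝ)) * jb ‖ω‖ ^ (-β) * ‖ω - Y i‖ ^ (-at')) ≤
              K * (1 + ‖y - Y i‖ ^ (-(at' - 2*s/2))) :=
          fun i => lemSC hn (by linarith) hsn hβ (by linarith) h2 (Y i)
        choose K hKpos hK using hKi
        have hstep : ∀ y : Euc n, y ∉ Set.range Y →
            |f y| ≤ (γ * C * C' * (K₀ + ∑ i, K i)) *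
              (1 + ∑ i, ‖y - Y i‖ ^ (-(at' - s))) := by
          intro y hy
          have hyne : ∀ i : Fin N, y ≠ Y i := fun i h => hy ⟨i, h.symm⟩
          have hm1 : |f y| ≤ γ * C * C' *
              ((∫ ω : Euc n, ‖ω - y‖ ^ (2*s - (n:ℝ)) * jb ‖ω‖ ^ (-β)) +
               ∑ i, ∫ ω : Euc n, ‖ω - y‖ ^ (2*s - (n:ℝ)) * jb ‖ω‖ ^ (-β) *
                 ‖ω - Y i‖ ^ (-at')) :=
            master at' C' hC'0 h1 hfb y hy (fun i => (hK i y (hyne i)).1)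
          have hterm : ∀ i : Fin N, 0 ≤ ‖y - Y i‖ ^ (-(at' - s)) :=
            fun i => rpow_nonneg (norm_nonneg _) _
          have hKsum : ∀ i : Fin N, K i ≤ ∑ j, K j :=
            fun i => Finset.single_le_sum (fun j _ => hKpos j) (Finset.mem_univ i)
          have h22 : (∑ i, ∫ ω : Euc n, ‖ω - y‖ ^ (2*s - (n:ℝ)) * jb ‖ω‖ ^ (-β) *
                 ‖ω - Y i‖ ^ (-at'))
              ≤ ∑ i, K i * (1 + ‖y - Y i‖ ^ (-(at' - s))) := by
            apply Finset.sum_le_sum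
            intro i _
            have := (hK i y (hyne i)).2
            rw [show -(at' - 2*s/2) = -(at' - s) by ring] at this
            exact this
          have h23 : (∑ i, K i * (1 + ‖y - Y i‖ ^ (-(at' - s))))
              ≤ (∑ i, K i) + (∑ i, K i) * ∑ i, ‖y - Y i‖ ^ (-(at' - s)) := by
            rw [Finset.mul_sum]
            rw [show (∑ i, K i * (1 + ‖y - Y i‖ ^ (-(at' - s))))
              = (∑ i, K i) + ∑ i, K i * ‖y - Y i‖ ^ (-(at' - s)) by
                rw [← Finset.sum_add_distrib]; apply Finset.sum_congr rfl; intro i _; ring]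
            apply add_le_add le_rfl
            apply Finset.sum_le_sum
            intro i _
            exact mul_le_mul_of_nonneg_right (hKsum i) (hterm i)
          calc |f y| ≤ γ * C * C' *
              ((∫ ω : Euc n, ‖ω - y‖ ^ (2*s - (n:ℝ)) * jb ‖ω‖ ^ (-β)) +
               ∑ i, ∫ ω : Euc n, ‖ω - y‖ ^ (2*s - (n:ℝ)) * jb ‖ω‖ ^ (-β) *
                 ‖ω - Y i‖ ^ (-at')) := hm1
            _ ≤ γ * C * C' * (K₀ + ((∑ i, K i) + (∑ i, K i) *
                ∑ i, ‖y - Y i‖ ^ (-(at' - s)))) := by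
                apply mul_le_mul_of_nonneg_left _ (by positivity)
                exact add_le_add (hK₀ y).2 (le_trans h22 h23)
            _ ≤ (γ * C * C' * (K₀ + ∑ i, K i)) *
                (1 + ∑ i, ‖y - Y i‖ ^ (-(at' - s))) := by
                have hsum0 : 0 ≤ ∑ i, ‖y - Y i‖ ^ (-(at' - s)) :=
                  Finset.sum_nonneg fun i _ => hterm i
                have hKsum0 : 0 ≤ ∑ i, K i := Finset.sum_nonneg fun i _ => hKpos i
                have hγCC' : 0 ≤ γ * C * C' := by positivity
                nlinarith [mul_nonneg hγCC' (mul_nonneg hK₀0 hsum0)]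
        apply IH (at' - s) (by linarith) (by linarith)
          (by push_cast; push_cast at h3; linarith)
        have hKsum0 : 0 ≤ ∑ i, K i := Finset.sum_nonneg fun i _ => hKpos i
        exact ⟨γ * C * C' * (K₀ + ∑ i, K i), by positivity, hstep⟩
  obtain ⟨k₀, hk₀⟩ := exists_nat_ge (α / s)
  apply boot k₀ α hα hαn
  · rw [div_le_iff₀ hs] at hk₀
    push_cast
    nlinarith
  · exact ⟨C, hC.le, hf⟩

end
end
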